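/- arXiv:1507.01446 — 17 statements merged into one kernel-verified Lean document; each statement's English description precedes it below -/
import Mathlib

section
/- Let R be an associative unital ring and let a, b, c ∈ R. If a has a (b,c)-inverse, then b, c and t = c·a·b are all regular. -/
/-- `y` is a (b,c)-inverse of `a`. -/
def IsBCInverse {R : Type*} [Ring R] (a b c y : R) : Prop :=
  (∃ r, y = b * r * y) ∧ (∃ s, y = y * s * c) ∧ y * a * b = b ∧ c * a * y = c

/-- If `a` has a (b,c)-inverse, then `b`, `c` and `t = c·a·b` are regular. -/
theorem regular_of_bc_invertible {R : Type*} [Ring R] (a b c : R)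
    (h : ∃ y, IsBCInverse a b c y) :
    (∃ x, b = b * x * b) ∧ (∃ x, c = c * x * c) ∧
    (∃ x, c * a * b = (c * a * b) * x * (c * a * b)) := by
  obtain ⟨y, ⟨r, hr⟩, ⟨s, hs⟩, hb, hc⟩ := h
  have hbr : b = b * r * b := by
    calc b = y * a * b := hb.symm
    _ = (b * r * y) * a * b := by rw [← hr]
    _ = b * r * (y * a * b) := by noncomm_ring
    _ = b * r * b := by rw [hb]
  have hcs : c = c * s * c := by
    calc c = c * a * y := hc.symm
    _ = c * a * (y * s * c) := by rw [← hs]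
    _ = (c * a * y) * s * c := by noncomm_ring
    _ = c * s * c := by rw [hc]
  refine ⟨⟨r, hbr⟩, ⟨s, hcs⟩, ⟨r * y * s, ?_⟩⟩
  calc c * a * b = c * s * c * a * b := by rw [← hcs]
  _ = c * a * (b * r * y) * s * (c * a * b) := by rw [← hr, hc]; noncomm_ring
  _ = (c * a * b) * (r * y * s) * (c * a * b) := by noncomm_ring
end

section
/- Let R be an associative unital ring, let a, b, c ∈ R, and suppose t = c·a·b is regular. Then the following statements are equivalent: (i) a has a (b,c)-inverse; (ii) r(a) ∩ bR = {0} and R = (a·b)R ⊕ r(c) (i.e., every x ∈ R can be written x = a·b·u + v with c·v = 0, and (a·b)R ∩ r(c) = {0}); (iii) r(t) = r(b) and tR = cR; (iv) l(t) = l(c) and Rt = Rb; (v) l(t) = l(c) and r(t) = r(b). -/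
/-- If `t = c·a·b` is regular, then (i)–(v) are equivalent. -/
theorem exists_bc_inverse_tfae {R : Type*} [Ring R] (a b c : R)
    (ht : ∃ x, c * a * b = (c * a * b) * x * (c * a * b)) :
    List.TFAE
      [ (∃ y, IsBCInverse a b c y),
        ({x : R | a * x = 0} ∩ {x : R | ∃ u, x = b * u} = {0}) ∧
          (∀ x : R, ∃ u v, x = a * b * u + v ∧ c * v = 0) ∧
          ({x : R | ∃ u, x = a * b * u} ∩ {x : R | c * x = 0} = {0}),
        ({x : R | c * a * b * x = 0} = {x : R | b * x = 0}) ∧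
          ({x : R | ∃ u, x = c * a * b * u} = {x : R | ∃ u, x = c * u}),
        ({x : R | x * (c * a * b) = 0} = {x : R | x * c = 0}) ∧
          ({x : R | ∃ u, x = u * (c * a * b)} = {x : R | ∃ u, x = u * b}),
        ({x : R | x * (c * a * b) = 0} = {x : R | x * c = 0}) ∧
          ({x : R | c * a * b * x = 0} = {x : R | b * x = 0}) ] := by
  obtain ⟨x, hx⟩ := ht
  tfae_have 1 → 2 := by
    rintro ⟨y, ⟨r, hr⟩, ⟨s, hs⟩, hyab, hcay⟩
    refine ⟨?_, ?_, ?_⟩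
    · ext z
      simp only [Set.mem_inter_iff, Set.mem_setOf_eq, Set.mem_singleton_iff]
      constructor
      · rintro ⟨haz, u, rfl⟩
        have : y * (a * (b * u)) = b * u := by
          rw [← mul_assoc, ← mul_assoc, hyab]
        rw [← this, haz, mul_zero]
      · rintro rfl
        exact ⟨mul_zero a, 0, (mul_zero b).symm⟩
    · intro z
      refine ⟨r * y * z, z - a * b * (r * y * z), by abel, ?_⟩
      have hc : c * (a * (b * (r * y * z))) = c * z := by
        have : b * (r * y) = y := by rw [← mul_assoc, ← hr]
        calc c * (a * (b * (r * y * z))) = c * a * (b * (r * y)) * z := by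
              rw [mul_assoc r y z]; noncomm_ring
          _ = c * a * y * z := by rw [this]
          _ = c * z := by rw [hcay]
      calc c * (z - a * b * (r * y * z)) = c * z - c * (a * (b * (r * y * z))) := by
            noncomm_ring
        _ = 0 := by rw [hc, sub_self]
    · ext z
      simp only [Set.mem_inter_iff, Set.mem_setOf_eq, Set.mem_singleton_iff]
      constructor
      · rintro ⟨⟨u, rfl⟩, hcz⟩
        rw [mul_assoc a b u] at hcz
        have hbu : b * u = 0 := by
          have e1 : b * u = y * s * (c * (a * (b * u))) := by
            conv_lhs => rw [← hyab]
            conv_lhs => rw [hs]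
            noncomm_ring
          rw [e1, hcz, mul_zero]
        rw [mul_assoc, hbu, mul_zero]
      · rintro rfl
        exact ⟨⟨0, (mul_zero _).symm⟩, mul_zero c⟩
  tfae_have 2 → 3 := by
    rintro ⟨h1, h2, h3⟩
    constructor
    · ext z
      simp only [Set.mem_setOf_eq]
      constructor
      · intro hz
        have habz : a * b * z = 0 := by
          have : a * b * z ∈ ({x : R | ∃ u, x = a * b * u} ∩ {x : R | c * x = 0}) :=
            ⟨⟨z, rfl⟩, show c * (a * b * z) = 0 by rw [← mul_assoc, ← mul_assoc]; exact hz⟩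
          simpa [h3] using this
        have hbz : b * z = 0 := by
          have : b * z ∈ ({x : R | a * x = 0} ∩ {x : R | ∃ u, x = b * u}) :=
            ⟨show a * (b * z) = 0 by rw [← mul_assoc]; exact habz, ⟨z, rfl⟩⟩
          simpa [h1] using this
        exact hbz
      · intro hz
        rw [mul_assoc, hz, mul_zero]
    · ext z
      simp only [Set.mem_setOf_eq]
      constructor
      · rintro ⟨u, rfl⟩
        exact ⟨a * b * u, by noncomm_ring⟩
      · rintro ⟨u, rfl⟩
        obtain ⟨u₀, v, h1e, h2e⟩ := h2 1
        have hc : c = c * a * b * u₀ := by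
          calc c = c * (a * b * u₀ + v) := by rw [← h1e, mul_one]
            _ = c * a * b * u₀ + c * v := by noncomm_ring
            _ = c * a * b * u₀ := by rw [h2e, add_zero]
        refine ⟨u₀ * u, ?_⟩
        conv_lhs => rw [hc]
        noncomm_ring
  tfae_have 3 → 5 := by
    rintro ⟨h1, h2⟩
    refine ⟨?_, h1⟩
    ext z
    simp only [Set.mem_setOf_eq]
    constructor
    · intro hz
      have hc : c ∈ {x : R | ∃ u, x = c * u} := ⟨1, (mul_one c).symm⟩
      rw [← h2] at hc
      obtain ⟨u₀, hu₀⟩ := hc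
      rw [hu₀, ← mul_assoc, hz, zero_mul]
    · intro hz
      rw [show z * (c * a * b) = z * c * (a * b) by noncomm_ring, hz, zero_mul]
  tfae_have 5 → 1 := by
    rintro ⟨hl, hr⟩
    have hc : c * a * b * x * c = c := by
      have : (1 - c * a * b * x) * (c * a * b) = 0 := by
        rw [sub_mul, one_mul, ← hx, sub_self]
      have h2 : (1 - c * a * b * x) ∈ {x_1 : R | x_1 * (c * a * b) = 0} := this
      rw [hl] at h2
      have h3 : (1 - c * a * b * x) * c = 0 := h2
      rw [sub_mul, one_mul, sub_eq_zero] at h3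
      exact h3.symm
    have hb : b * (x * (c * a * b)) = b := by
      have : c * a * b * (x * (c * a * b) - 1) = 0 := by
        rw [mul_sub, mul_one, ← mul_assoc, ← hx, sub_self]
      have h2 : (x * (c * a * b) - 1) ∈ {x_1 : R | b * x_1 = 0} := by
        rw [← hr]; exact this
      have h3 : b * (x * (c * a * b) - 1) = 0 := h2
      rw [mul_sub, mul_one, sub_eq_zero] at h3
      exact h3
    refine ⟨b * x * c, ⟨x * c * a, ?_⟩, ⟨a * b * x, ?_⟩, ?_, ?_⟩
    · calc b * x * c = b * x * (c * a * b * x * c) := by rw [hc]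
        _ = b * (x * c * a) * (b * x * c) := by noncomm_ring
    · calc b * x * c = b * (x * (c * a * b)) * x * c := by rw [hb]
        _ = b * x * c * (a * b * x) * c := by noncomm_ring
    · calc b * x * c * a * b = b * (x * (c * a * b)) := by noncomm_ring
        _ = b := hb
    · calc c * a * (b * x * c) = c * a * b * x * c := by noncomm_ring
        _ = c := hc
  tfae_have 1 → 4 := by
    rintro ⟨y, ⟨r, hr⟩, ⟨s, hs⟩, hyab, hcay⟩
    constructor
    · ext z
      simp only [Set.mem_setOf_eq]
      constructor
      · intro hz
        calc z * c = z * (c * a * y) := by rw [hcay]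
          _ = z * (c * a * (b * r * y)) := by rw [← hr]
          _ = z * (c * a * b) * (r * y) := by noncomm_ring
          _ = 0 := by rw [hz, zero_mul]
      · intro hz
        rw [show z * (c * a * b) = z * c * (a * b) by noncomm_ring, hz, zero_mul]
    · ext z
      simp only [Set.mem_setOf_eq]
      constructor
      · rintro ⟨u, rfl⟩
        exact ⟨u * c * a, by noncomm_ring⟩
      · rintro ⟨u, rfl⟩
        refine ⟨u * (y * s), ?_⟩
        calc u * b = u * (y * a * b) := by rw [hyab]
          _ = u * (y * s * c * a * b) := by rw [← hs]
          _ = u * (y * s) * (c * a * b) := by noncomm_ring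
  tfae_have 4 → 5 := by
    rintro ⟨h1, h2⟩
    refine ⟨h1, ?_⟩
    ext z
    simp only [Set.mem_setOf_eq]
    constructor
    · intro hz
      have hbmem : b ∈ {x : R | ∃ u, x = u * b} := ⟨1, (one_mul b).symm⟩
      rw [← h2] at hbmem
      obtain ⟨u₀, hu₀⟩ := hbmem
      rw [hu₀, mul_assoc, hz, mul_zero]
    · intro hz
      rw [mul_assoc, hz, mul_zero]
  tfae_finish
end

section
/- Let R be an associative unital ring, let a, b, c ∈ R, and suppose both b and c are regular. Set t = c·a·b. Then the following statements are equivalent: (i) a has a (b,c)-inverse; (ii) r(a) ∩ bR = {0} and R = (a·b)R ⊕ r(c) (i.e., every x ∈ R can be written x = a·b·u + v with c·v = 0, and (a·b)R ∩ r(c) = {0}); (iii) r(t) = r(b) and tR = cR; (iv) l(t) = l(c) and Rt = Rb. -/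
/-- If both `b` and `c` are regular, then (i)–(iv) are equivalent. -/
theorem exists_bc_inverse_tfae_of_regular {R : Type*} [Ring R] (a b c : R)
    (hb : ∃ x, b = b * x * b) (hc : ∃ x, c = c * x * c) :
    List.TFAE
      [ (∃ y, IsBCInverse a b c y),
        ({x : R | a * x = 0} ∩ {x : R | ∃ u, x = b * u} = {0}) ∧
          (∀ x : R, ∃ u v, x = a * b * u + v ∧ c * v = 0) ∧
          ({x : R | ∃ u, x = a * b * u} ∩ {x : R | c * x = 0} = {0}),
        ({x : R | c * a * b * x = 0} = {x : R | b * x = 0}) ∧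
          ({x : R | ∃ u, x = c * a * b * u} = {x : R | ∃ u, x = c * u}),
        ({x : R | x * (c * a * b) = 0} = {x : R | x * c = 0}) ∧
          ({x : R | ∃ u, x = u * (c * a * b)} = {x : R | ∃ u, x = u * b}) ] := by
  obtain ⟨β, hβ⟩ := hb
  obtain ⟨γ, hγ⟩ := hc
  tfae_have 1 → 2 := by
    rintro ⟨y, ⟨r, hr⟩, ⟨s, hs⟩, hyab, hcay⟩
    refine ⟨?_, fun x => ⟨r * y * x, x - a * (y * x), ?_, ?_⟩, ?_⟩
    · ext x
      simp only [Set.mem_inter_iff, Set.mem_setOf_eq, Set.mem_singleton_iff]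
      constructor
      · rintro ⟨hax, u, rfl⟩
        have hbu : b * u = 0 := by
          calc b * u = y * a * b * u := by rw [hyab]
            _ = y * s * c * (a * (b * u)) := by rw [← hs]; noncomm_ring
            _ = y * s * c * 0 := by rw [hax]
            _ = 0 := by rw [mul_zero]
        rw [hbu]
      · rintro rfl
        exact ⟨mul_zero a, 0, (mul_zero b).symm⟩
    · have h1 : a * b * (r * y * x) = a * (y * x) := by
        calc a * b * (r * y * x) = a * ((b * r * y) * x) := by noncomm_ring
          _ = a * (y * x) := by rw [← hr]
      rw [h1]; noncomm_ring
    · have h2 : c * (a * (y * x)) = c * x := by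
        calc c * (a * (y * x)) = c * a * y * x := by noncomm_ring
          _ = c * x := by rw [hcay]
      rw [mul_sub, h2, sub_self]
    · ext x
      simp only [Set.mem_inter_iff, Set.mem_setOf_eq, Set.mem_singleton_iff]
      constructor
      · rintro ⟨⟨u, rfl⟩, hcx⟩
        have hbu : b * u = 0 := by
          calc b * u = y * a * b * u := by rw [hyab]
            _ = y * s * c * (a * b * u) := by rw [← hs]; noncomm_ring
            _ = y * s * (c * (a * b * u)) := by noncomm_ring
            _ = 0 := by rw [hcx, mul_zero]
        calc a * b * u = a * (b * u) := by rw [mul_assoc]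
          _ = 0 := by rw [hbu, mul_zero]
      · rintro rfl
        exact ⟨⟨0, (mul_zero _).symm⟩, mul_zero c⟩
  tfae_have 2 → 3 := by
    rintro ⟨h1, h2, h3⟩
    constructor
    · ext x
      simp only [Set.mem_setOf_eq]
      constructor
      · intro htx
        have habx : a * b * x = 0 := by
          have hm : a * b * x ∈ ({x : R | ∃ u, x = a * b * u} ∩ {x : R | c * x = 0}) :=
            ⟨⟨x, rfl⟩, by show c * (a * b * x) = 0
                          rw [show c * (a * b * x) = c * a * b * x by noncomm_ring, htx]⟩
          rw [h3] at hm; exact hm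
        have hbx : b * x = 0 := by
          have hm : b * x ∈ ({x : R | a * x = 0} ∩ {x : R | ∃ u, x = b * u}) :=
            ⟨by show a * (b * x) = 0
                rw [show a * (b * x) = a * b * x by noncomm_ring, habx], ⟨x, rfl⟩⟩
          rw [h1] at hm; exact hm
        exact hbx
      · intro hbx
        calc c * a * b * x = c * a * (b * x) := by noncomm_ring
          _ = 0 := by rw [hbx, mul_zero]
    · ext x
      simp only [Set.mem_setOf_eq]
      constructor
      · rintro ⟨u, rfl⟩
        exact ⟨a * b * u, by noncomm_ring⟩
      · rintro ⟨u, rfl⟩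
        obtain ⟨w, v, huv, hcv⟩ := h2 u
        refine ⟨w, ?_⟩
        calc c * u = c * (a * b * w + v) := by rw [← huv]
          _ = c * (a * b * w) + c * v := by rw [mul_add]
          _ = c * a * b * w := by rw [hcv, add_zero]; noncomm_ring
  tfae_have 3 → 1 := by
    rintro ⟨h1, h2⟩
    have hcmem : c ∈ {x : R | ∃ u, x = c * a * b * u} := by
      rw [h2]; exact ⟨γ * c, by rw [← mul_assoc]; exact hγ⟩
    obtain ⟨w, hw⟩ := hcmem
    refine ⟨b * (w * (γ * c)), ⟨β, ?_⟩, ⟨γ, ?_⟩, ?_, ?_⟩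
    · exact (calc b * β * (b * (w * (γ * c))) = (b * β * b) * (w * (γ * c)) := by noncomm_ring
        _ = b * (w * (γ * c)) := by rw [← hβ]).symm
    · exact (calc b * (w * (γ * c)) * γ * c = b * (w * (γ * (c * γ * c))) := by noncomm_ring
        _ = b * (w * (γ * c)) := by rw [← hγ]).symm
    · have key : c * a * b * (w * (γ * (c * a * b)) - 1) = 0 := by
        calc c * a * b * (w * (γ * (c * a * b)) - 1)
            = (c * a * b * w) * (γ * (c * a * b)) - c * a * b := by noncomm_ring
          _ = c * (γ * (c * a * b)) - c * a * b := by rw [← hw]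
          _ = (c * γ * c) * a * b - c * a * b := by noncomm_ring
          _ = 0 := by rw [← hγ, sub_self]
      have hkey : w * (γ * (c * a * b)) - 1 ∈ {x : R | c * a * b * x = 0} := key
      rw [h1] at hkey
      have hb0 : b * (w * (γ * (c * a * b)) - 1) = 0 := hkey
      have : b * (w * (γ * (c * a * b))) = b := by
        have := sub_eq_zero.mp (by rw [← hb0]; noncomm_ring :
          b * (w * (γ * (c * a * b))) - b = 0)
        exact this
      calc b * (w * (γ * c)) * a * b = b * (w * (γ * (c * a * b))) := by noncomm_ring
        _ = b := this
    · calc c * a * (b * (w * (γ * c))) = (c * a * b * w) * (γ * c) := by noncomm_ring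
        _ = c * (γ * c) := by rw [← hw]
        _ = c := by rw [← mul_assoc, ← hγ]
  tfae_have 1 → 4 := by
    rintro ⟨y, ⟨r, hr⟩, ⟨s, hs⟩, hyab, hcay⟩
    constructor
    · ext x
      simp only [Set.mem_setOf_eq]
      constructor
      · intro htx
        calc x * c = x * (c * a * y) := by rw [hcay]
          _ = x * (c * a * (b * r * y)) := by rw [← hr]
          _ = (x * (c * a * b)) * (r * y) := by noncomm_ring
          _ = 0 := by rw [htx, zero_mul]
      · intro hxc
        calc x * (c * a * b) = (x * c) * (a * b) := by noncomm_ring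
          _ = 0 := by rw [hxc, zero_mul]
    · ext x
      simp only [Set.mem_setOf_eq]
      constructor
      · rintro ⟨u, rfl⟩
        exact ⟨u * c * a, by noncomm_ring⟩
      · rintro ⟨u, rfl⟩
        refine ⟨u * (y * s), ?_⟩
        calc u * b = u * (y * a * b) := by rw [hyab]
          _ = u * ((y * s * c) * a * b) := by rw [← hs]
          _ = u * (y * s) * (c * a * b) := by noncomm_ring
  tfae_have 4 → 1 := by
    rintro ⟨h1, h2⟩
    have hbmem : b ∈ {x : R | ∃ u, x = u * (c * a * b)} := by
      rw [h2]; exact ⟨b * β, hβ⟩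
    obtain ⟨v, hv⟩ := hbmem
    refine ⟨b * (β * (v * c)), ⟨β, ?_⟩, ⟨γ, ?_⟩, ?_, ?_⟩
    · exact (calc b * β * (b * (β * (v * c))) = (b * β * b) * (β * (v * c)) := by noncomm_ring
        _ = b * (β * (v * c)) := by rw [← hβ]).symm
    · exact (calc b * (β * (v * c)) * γ * c = b * (β * (v * (c * γ * c))) := by noncomm_ring
        _ = b * (β * (v * c)) := by rw [← hγ]).symm
    · calc b * (β * (v * c)) * a * b = b * β * (v * (c * a * b)) := by noncomm_ring
        _ = b * β * b := by rw [← hv]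
        _ = b := by rw [← hβ]
    · have key : (c * a * (b * β) * v - 1) * (c * a * b) = 0 := by
        calc (c * a * (b * β) * v - 1) * (c * a * b)
            = c * a * (b * β) * (v * (c * a * b)) - c * a * b := by noncomm_ring
          _ = c * a * (b * β) * b - c * a * b := by rw [← hv]
          _ = c * a * (b * β * b) - c * a * b := by noncomm_ring
          _ = 0 := by rw [← hβ, sub_self]
      have hkey : c * a * (b * β) * v - 1 ∈ {x : R | x * (c * a * b) = 0} := key
      rw [h1] at hkey
      have hc0 : (c * a * (b * β) * v - 1) * c = 0 := hkey
      have hcc : c * a * (b * β) * v * c = c := by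
        have := sub_eq_zero.mp (by rw [← hc0]; noncomm_ring :
          c * a * (b * β) * v * c - c = 0)
        exact this
      calc c * a * (b * (β * (v * c))) = c * a * (b * β) * v * c := by noncomm_ring
        _ = c := hcc
  tfae_finish
end

section
/- Let R be an associative unital ring, let a, b, c, y ∈ R, and suppose t = c·a·b is regular. Then the following statements are equivalent: (i) y is the (b,c)-inverse of a; (ii) y is a hybrid (b,c)-inverse of a; (iii) y is an annihilator (b,c)-inverse of a. -/
/-- `y` is a hybrid (b,c)-inverse of `a`: `y·a·y = y`, `yR = bR`, `r(y) = r(c)`. -/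
def IsHybridBCInverse {R : Type*} [Ring R] (a b c y : R) : Prop :=
  y * a * y = y ∧ ({x : R | ∃ u, x = y * u} = {x : R | ∃ u, x = b * u}) ∧
    ({x : R | y * x = 0} = {x : R | c * x = 0})

/-- `y` is an annihilator (b,c)-inverse of `a`: `y·a·y = y`, `l(y) = l(b)`, `r(y) = r(c)`. -/
def IsAnnihilatorBCInverse {R : Type*} [Ring R] (a b c y : R) : Prop :=
  y * a * y = y ∧ ({x : R | x * y = 0} = {x : R | x * b = 0}) ∧
    ({x : R | y * x = 0} = {x : R | c * x = 0})

/-- If `t = c·a·b` is regular, then the (b,c)-inverse, the hybrid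
(b,c)-inverse and the annihilator (b,c)-inverse notions coincide. -/
theorem bc_hybrid_annihilator_tfae {R : Type*} [Ring R] (a b c y : R)
    (ht : ∃ x, c * a * b = (c * a * b) * x * (c * a * b)) :
    List.TFAE
      [ IsBCInverse a b c y,
        IsHybridBCInverse a b c y,
        IsAnnihilatorBCInverse a b c y ] := by
  obtain ⟨x, hx⟩ := ht
  tfae_have 1 → 2 := by
    rintro ⟨⟨r, hr⟩, ⟨s, hs⟩, hb, hc⟩
    refine ⟨?_, ?_, ?_⟩
    · calc y * a * y = y * a * (b * r * y) := by nth_rewrite 2 [hr]; rfl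
        _ = (y * a * b) * r * y := by noncomm_ring
        _ = b * r * y := by rw [hb]
        _ = y := hr.symm
    · ext z
      simp only [Set.mem_setOf_eq]
      constructor
      · rintro ⟨u, rfl⟩
        exact ⟨r * (y * u), by nth_rewrite 1 [hr]; noncomm_ring⟩
      · rintro ⟨u, rfl⟩
        exact ⟨a * (b * u), by nth_rewrite 1 [← hb]; noncomm_ring⟩
    · ext z
      simp only [Set.mem_setOf_eq]
      constructor
      · intro hz
        calc c * z = (c * a * y) * z := by rw [hc]
          _ = c * a * (y * z) := by noncomm_ring
          _ = 0 := by rw [hz, mul_zero]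
      · intro hz
        calc y * z = (y * s * c) * z := by rw [← hs]
          _ = y * s * (c * z) := by noncomm_ring
          _ = 0 := by rw [hz, mul_zero]
  tfae_have 2 → 3 := by
    rintro ⟨h1, hIm, hR⟩
    have hIm' : ∀ z : R, (∃ u, z = y * u) ↔ (∃ u, z = b * u) := fun z => Set.ext_iff.mp hIm z
    obtain ⟨u0, hu0⟩ := (hIm' y).mp ⟨1, by rw [mul_one]⟩
    obtain ⟨v0, hv0⟩ := (hIm' b).mpr ⟨1, by rw [mul_one]⟩
    refine ⟨h1, ?_, hR⟩
    ext z
    simp only [Set.mem_setOf_eq]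
    constructor
    · intro hz
      calc z * b = z * (y * v0) := by rw [← hv0]
        _ = (z * y) * v0 := by noncomm_ring
        _ = 0 := by rw [hz, zero_mul]
    · intro hz
      calc z * y = z * (b * u0) := by rw [← hu0]
        _ = (z * b) * u0 := by noncomm_ring
        _ = 0 := by rw [hz, zero_mul]
  tfae_have 3 → 1 := by
    rintro ⟨h1, hL, hR⟩
    have hL' : ∀ z : R, z * y = 0 ↔ z * b = 0 := fun z => Set.ext_iff.mp hL z
    have hR' : ∀ z : R, y * z = 0 ↔ c * z = 0 := fun z => Set.ext_iff.mp hR z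
    -- Step A : y * a * b = b
    have hA : y * a * b = b := by
      have h0 : (1 - y * a) * y = 0 := by
        calc (1 - y * a) * y = y - y * a * y := by noncomm_ring
          _ = 0 := by rw [h1, sub_self]
      have h0' : (1 - y * a) * b = 0 := (hL' _).mp h0
      have : b - y * a * b = 0 := by
        calc b - y * a * b = (1 - y * a) * b := by noncomm_ring
          _ = 0 := h0'
      exact (sub_eq_zero.mp this).symm
    -- Step B : c * a * y = c
    have hB : c * a * y = c := by
      have h0 : y * (a * y - 1) = 0 := by
        calc y * (a * y - 1) = y * a * y - y := by noncomm_ring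
          _ = 0 := by rw [h1, sub_self]
      have h0' : c * (a * y - 1) = 0 := (hR' _).mp h0
      have : c * a * y - c = 0 := by
        calc c * a * y - c = c * (a * y - 1) := by noncomm_ring
          _ = 0 := h0'
      exact sub_eq_zero.mp this
    -- Step C : c = c * a * b * x * c
    have hC : c = c * a * b * x * c := by
      have h0 : ((c * a) - (c * a * b) * x * (c * a)) * b = 0 := by
        calc ((c * a) - (c * a * b) * x * (c * a)) * b
            = c * a * b - (c * a * b) * x * (c * a * b) := by noncomm_ring
          _ = 0 := by rw [← hx, sub_self]
      have h0' : ((c * a) - (c * a * b) * x * (c * a)) * y = 0 := (hL' _).mpr h0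
      have h2 : c * a * y - c * a * b * x * (c * a * y) = 0 := by
        calc c * a * y - c * a * b * x * (c * a * y)
            = ((c * a) - (c * a * b) * x * (c * a)) * y := by noncomm_ring
          _ = 0 := h0'
      rw [hB] at h2
      exact (sub_eq_zero.mp h2)
    -- Step D : y = b * x * c
    have hD : y = b * x * c := by
      have h0 : c * (a * (y - b * x * c)) = 0 := by
        calc c * (a * (y - b * x * c))
            = c * a * y - c * a * b * x * c := by noncomm_ring
          _ = 0 := by rw [hB, ← hC, sub_self]
      have h0' : y * (a * (y - b * x * c)) = 0 := (hR' _).mpr h0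
      have h2 : y - b * x * c = 0 := by
        calc y - b * x * c = y * a * y - (y * a * b) * x * c := by rw [h1, hA]
          _ = y * (a * (y - b * x * c)) := by noncomm_ring
          _ = 0 := h0'
      exact sub_eq_zero.mp h2
    refine ⟨⟨x * c * a, ?_⟩, ⟨a * b * x, ?_⟩, hA, hB⟩
    · calc y = b * x * c := hD
        _ = b * x * (c * a * y) := by rw [hB]
        _ = b * (x * c * a) * y := by noncomm_ring
    · calc y = b * x * c := hD
        _ = (y * a * b) * x * c := by rw [hA]
        _ = y * (a * b * x) * c := by noncomm_ring
  tfae_finish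
end

section
/- Let R be an associative unital ring, let a, b, c, y ∈ R, and suppose both b and c are regular. Then the following statements are equivalent: (i) y is the (b,c)-inverse of a; (ii) y is a hybrid (b,c)-inverse of a; (iii) y is an annihilator (b,c)-inverse of a. -/
/-- If both `b` and `c` are regular, then the (b,c)-inverse, the hybrid
(b,c)-inverse and the annihilator (b,c)-inverse notions coincide. -/
theorem bc_hybrid_annihilator_tfae_of_regular {R : Type*} [Ring R] (a b c y : R)
    (hb : ∃ x, b = b * x * b) (hc : ∃ x, c = c * x * c) :
    List.TFAE
      [ IsBCInverse a b c y,
        IsHybridBCInverse a b c y,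
        IsAnnihilatorBCInverse a b c y ] := by
  tfae_have 1 → 2 := by
    rintro ⟨⟨r, hr⟩, ⟨s, hs⟩, hab, hca⟩
    refine ⟨?_, ?_, ?_⟩
    · calc y * a * y = y * a * (b * r * y) := by rw [← hr]
        _ = y * a * b * r * y := by simp only [mul_assoc]
        _ = b * r * y := by rw [hab]
        _ = y := hr.symm
    · ext x
      constructor
      · rintro ⟨u, rfl⟩
        refine ⟨r * (y * u), ?_⟩
        have : b * (r * (y * u)) = b * r * y * u := by simp only [mul_assoc]
        rw [this, ← hr]
      · rintro ⟨u, rfl⟩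
        refine ⟨a * (b * u), ?_⟩
        have : y * (a * (b * u)) = y * a * b * u := by simp only [mul_assoc]
        rw [this, hab]
    · ext x
      simp only [Set.mem_setOf_eq]
      constructor
      · intro hx
        have : c * x = c * a * y * x := by rw [hca]
        rw [this, mul_assoc, hx, mul_zero]
      · intro hx
        have : y * x = y * s * c * x := by rw [← hs]
        rw [this, mul_assoc, hx, mul_zero]
  tfae_have 2 → 3 := by
    rintro ⟨hy, hR, hr⟩
    refine ⟨hy, ?_, hr⟩
    obtain ⟨u, hu⟩ : y ∈ {x : R | ∃ u, x = b * u} := hR ▸ ⟨1, (mul_one y).symm⟩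
    obtain ⟨v, hv⟩ : b ∈ {x : R | ∃ u, x = y * u} := hR ▸ ⟨1, (mul_one b).symm⟩
    ext x
    simp only [Set.mem_setOf_eq]
    constructor
    · intro hx
      rw [hv, ← mul_assoc, hx, zero_mul]
    · intro hx
      rw [hu, ← mul_assoc, hx, zero_mul]
  tfae_have 3 → 1 := by
    rintro ⟨hy, hl, hr⟩
    have hl' : ∀ x : R, x * y = 0 ↔ x * b = 0 := fun x => Set.ext_iff.mp hl x
    have hr' : ∀ x : R, y * x = 0 ↔ c * x = 0 := fun x => Set.ext_iff.mp hr x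
    obtain ⟨xb, hxb⟩ := hb
    obtain ⟨xc, hxc⟩ := hc
    have h1 : (1 - b * xb) * b = 0 := by rw [sub_mul, one_mul, ← hxb, sub_self]
    have h1' : (1 - b * xb) * y = 0 := (hl' _).mpr h1
    have h2 : c * (1 - xc * c) = 0 := by rw [mul_sub, mul_one, ← mul_assoc, ← hxc, sub_self]
    have h2' : y * (1 - xc * c) = 0 := (hr' _).mpr h2
    have h3 : (y * a - 1) * y = 0 := by rw [sub_mul, one_mul, hy, sub_self]
    have h3' : (y * a - 1) * b = 0 := (hl' _).mp h3
    have h4 : y * (a * y - 1) = 0 := by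
      rw [mul_sub, mul_one, ← mul_assoc, hy, sub_self]
    have h4' : c * (a * y - 1) = 0 := (hr' _).mp h4
    refine ⟨⟨xb, ?_⟩, ⟨xc, ?_⟩, ?_, ?_⟩
    · have h : b * xb * y - y = 0 := by
        rw [show b * xb * y - y = -((1 - b * xb) * y) by noncomm_ring, h1', neg_zero]
      exact (sub_eq_zero.mp h).symm
    · have h : y - y * xc * c = 0 := by
        rw [show y - y * xc * c = y * (1 - xc * c) by noncomm_ring, h2']
      exact sub_eq_zero.mp h
    · have h : y * a * b - b = 0 := by
        rw [show y * a * b - b = (y * a - 1) * b by noncomm_ring, h3']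
      exact sub_eq_zero.mp h
    · have h : c * a * y - c = 0 := by
        rw [show c * a * y - c = c * (a * y - 1) by noncomm_ring, h4']
      exact sub_eq_zero.mp h
  tfae_finish
end

section
/- Let R be an associative unital ring, let a, b, c, d ∈ R, suppose y is the (b,c)-inverse of a, let b⁻ ∈ R satisfy b·b⁻·b = b, and set e = b·b⁻. Then the following statements are equivalent: (i) d has a (b,c)-inverse; (ii) e ∈ (e·y·d·e)R ∩ R(e·y·d·e); (iii) y·d·e + 1 − e is invertible in R. -/
lemma unit_aux {R : Type*} [Ring R] (e w u u' : R) (hee : e*e = e) (hew : e*w = w)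
    (hwe : w*e = w) (hu : w*u = e) (hu' : u'*w = e) : IsUnit (w + 1 - e) := by
  have k1 : w*(e*u*e) = e := by
    rw [← mul_assoc, ← mul_assoc, hwe, hu, hee]
  have k2 : e*(e*u*e) = e*u*e := by
    rw [← mul_assoc, ← mul_assoc, hee]
  have k3 : e*u'*e*w = e := by
    rw [mul_assoc, hew, mul_assoc, hu', hee]
  have h1 : (w + 1 - e) * (e*u*e + 1 - e) = 1 := by
    have expand : (w+1-e)*(e*u*e+1-e)
        = w*(e*u*e) + (e*u*e) - e*(e*u*e) + w + 1 - e - (w*e) - e + e*e := by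
      noncomm_ring
    rw [expand, k1, k2, hwe, hee]; abel
  have h2 : (e*u'*e + 1 - e) * (w + 1 - e) = 1 := by
    have expand : (e*u'*e+1-e)*(w+1-e)
        = e*u'*e*w + (e*u'*e) - e*u'*e*e + w + 1 - e - (e*w) - e + e*e := by
      noncomm_ring
    have k4 : e*u'*e*e = e*u'*e := by rw [mul_assoc (e*u') e e, hee]
    rw [expand, k3, k4, hew, hee]; abel
  have heq : e*u'*e + 1 - e = e*u*e + 1 - e := by
    calc e*u'*e + 1 - e = (e*u'*e + 1 - e) * ((w+1-e)*(e*u*e+1-e)) := by rw [h1, mul_one]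
    _ = ((e*u'*e + 1 - e) * (w+1-e))*(e*u*e+1-e) := (mul_assoc _ _ _).symm
    _ = e*u*e + 1 - e := by rw [h2, one_mul]
  exact ⟨⟨w+1-e, e*u*e+1-e, h1, by rw [← heq, h2]⟩, rfl⟩

/-- with `y = a^{‖(b,c)}` and `e = b·b⁻`, `d` has a (b,c)-inverse iff
`e ∈ (e·y·d·e)R ∩ R(e·y·d·e)` iff `y·d·e + 1 - e` is invertible. -/
theorem d_bc_inverse_tfae {R : Type*} [Ring R] (a b c d y bm : R)
    (hy : IsBCInverse a b c y) (hbm : b * bm * b = b) :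
    List.TFAE
      [ (∃ z, IsBCInverse d b c z),
        (∃ u, b * bm = (b * bm) * y * d * (b * bm) * u) ∧
          (∃ u, b * bm = u * ((b * bm) * y * d * (b * bm))),
        IsUnit (y * d * (b * bm) + 1 - b * bm) ] := by
  obtain ⟨⟨r, hr⟩, ⟨s, hs⟩, hyab, hcay⟩ := hy
  have hee : (b*bm)*(b*bm) = b*bm := by rw [← mul_assoc, hbm]
  have hey : b*bm*y = y := by
    nth_rewrite 1 [hr]
    rw [← mul_assoc, ← mul_assoc, hbm, ← hr]
  have hew : (b*bm)*(y*d*(b*bm)) = y*d*(b*bm) := by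
    rw [← mul_assoc (b*bm) (y*d) (b*bm), ← mul_assoc (b*bm) y d, hey]
  have hwe : y*d*(b*bm)*(b*bm) = y*d*(b*bm) := by
    rw [mul_assoc (y*d) (b*bm) (b*bm), hee]
  tfae_have 1 → 2
  · rintro ⟨z, ⟨r', hr'⟩, ⟨s', hs'⟩, hzdb, hcdz⟩
    have hez : b*bm*z = z := by
      nth_rewrite 1 [hr']
      rw [← mul_assoc, ← mul_assoc, hbm, ← hr']
    have hydz : y*d*z = y := by
      nth_rewrite 1 [hs]
      rw [mul_assoc (y*s) c d, mul_assoc (y*s) (c*d) z, hcdz, ← hs]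
    have hzay : z*a*y = z := by
      nth_rewrite 1 [hs']
      rw [mul_assoc (z*s') c a, mul_assoc (z*s') (c*a) y, hcay, ← hs']
    have hzde : z*(d*(b*bm)) = b*bm := by
      rw [← mul_assoc, ← mul_assoc, hzdb]
    have hey' : ∀ x : R, b*(bm*(y*x)) = y*x := fun x => by
      rw [← mul_assoc, ← mul_assoc, hey]
    have hez' : ∀ x : R, b*(bm*(z*x)) = z*x := fun x => by
      rw [← mul_assoc, ← mul_assoc, hez]
    have hydz' : ∀ x : R, y*(d*(z*x)) = y*x := fun x => by
      rw [← mul_assoc, ← mul_assoc, hydz]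
    have hzay' : ∀ x : R, z*(a*(y*x)) = z*x := fun x => by
      rw [← mul_assoc, ← mul_assoc, hzay]
    have hyab' : ∀ x : R, y*(a*(b*x)) = b*x := fun x => by
      rw [← mul_assoc, ← mul_assoc, hyab]
    constructor
    · refine ⟨z*a*(b*bm), ?_⟩
      simp only [mul_assoc]
      rw [hey', hez', hydz', hyab']
    · refine ⟨z*a, ?_⟩
      simp only [mul_assoc]
      rw [hey', hzay', hzde]
  tfae_have 2 → 3
  · rintro ⟨⟨u, hu⟩, ⟨u', hu'⟩⟩
    rw [hey] at hu hu'
    exact unit_aux (b*bm) (y*d*(b*bm)) u u' hee hew hwe hu.symm hu'.symm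
  tfae_have 3 → 1
  · intro h3
    obtain ⟨uu, huu⟩ := h3
    set t := y*d*(b*bm) + 1 - b*bm with ht
    set v := ((uu⁻¹ : Rˣ) : R) with hvdef
    have hv1 : t*v = 1 := by rw [← huu]; exact uu.mul_inv
    have hv2 : v*t = 1 := by rw [← huu]; exact uu.inv_mul
    have hte : t*(b*bm) = y*d*(b*bm) := by
      have expand : t*(b*bm) = y*d*(b*bm)*(b*bm) + b*bm - (b*bm)*(b*bm) := by
        rw [ht]; noncomm_ring
      rw [expand, hwe, hee]; abel
    have het : (b*bm)*t = y*d*(b*bm) := by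
      have expand : (b*bm)*t = (b*bm)*(y*d*(b*bm)) + b*bm - (b*bm)*(b*bm) := by
        rw [ht]; noncomm_ring
      rw [expand, hew, hee]; abel
    have hve : v*(b*bm) = (b*bm)*v := by
      calc v*(b*bm) = v*((b*bm)*(t*v)) := by rw [hv1, mul_one]
        _ = v*(((b*bm)*t)*v) := by rw [← mul_assoc (b*bm) t v]
        _ = v*((t*(b*bm))*v) := by rw [het, ← hte]
        _ = v*(t*((b*bm)*v)) := by rw [mul_assoc t (b*bm) v]
        _ = (v*t)*((b*bm)*v) := by rw [← mul_assoc]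
        _ = (b*bm)*v := by rw [hv2, one_mul]
    have hvw : v*(y*d*(b*bm)) = b*bm := by
      rw [← hte, ← mul_assoc, hv2, one_mul]
    have hwv : y*d*(b*bm)*v = b*bm := by
      rw [← hte, mul_assoc, ← hve, ← mul_assoc, hv1, one_mul]
    have hevy : (b*bm)*(v*y) = v*y := by
      rw [← mul_assoc, ← hve, mul_assoc, hey]
    have hvyd : v*(y*d*b) = b := by
      have h1 : y*d*b = y*d*(b*bm)*b := by
        rw [mul_assoc (y*d) (b*bm) b, hbm]
      rw [h1, ← mul_assoc v (y*d*(b*bm)) b, hvw, hbm]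
    have hydz2 : y*d*(v*y) = y := by
      calc y*d*(v*y) = y*d*((b*bm)*(v*y)) := by rw [hevy]
        _ = (y*d*(b*bm))*(v*y) := by rw [← mul_assoc]
        _ = ((y*d*(b*bm))*v)*y := by rw [← mul_assoc]
        _ = y := by rw [hwv, hey]
    refine ⟨v*y, ⟨bm, hevy.symm⟩, ⟨s, ?_⟩, ?_, ?_⟩
    · rw [mul_assoc (v*y) s c, mul_assoc v y (s*c), ← mul_assoc y s c, ← hs]
    · rw [mul_assoc v y d, mul_assoc v (y*d) b]
      exact hvyd
    · nth_rewrite 1 [← hcay]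
      rw [mul_assoc (c*a) y d, mul_assoc (c*a) (y*d) (v*y), hydz2, hcay]
  tfae_finish
end

section
/- Let R be an associative unital ring, let a, b, c, d ∈ R, suppose y is the (b,c)-inverse of a, let b⁻ ∈ R satisfy b·b⁻·b = b, and set e = b·b⁻. If x = y·d·e + 1 − e is invertible in R, then x⁻¹·y is the (b,c)-inverse of d. -/
/-- with `y = a^{‖(b,c)}`, `e = b·b⁻` and `x = y·d·e + 1 - e` invertible
with inverse `x'`, the element `x'·y = x⁻¹·y` is the (b,c)-inverse of `d`. -/
theorem d_bc_inverse_formula {R : Type*} [Ring R] (a b c d y bm x' : R)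
    (hy : IsBCInverse a b c y) (hbm : b * bm * b = b)
    (hx : (y * d * (b * bm) + 1 - b * bm) * x' = 1)
    (hx' : x' * (y * d * (b * bm) + 1 - b * bm) = 1) :
    IsBCInverse d b c (x' * y) := by
  obtain ⟨⟨r, hr⟩, ⟨s, hs⟩, hyab, hcay⟩ := hy
  -- e*y = y
  have hey : b * bm * y = y := by
    nth_rewrite 1 [hr]
    simp only [← mul_assoc, hbm]
    exact hr.symm
  -- e*e = e
  have hee : b * bm * (b * bm) = b * bm := by rw [← mul_assoc, hbm]
  -- x*e = y*d*e
  have hxe : (y * d * (b * bm) + 1 - b * bm) * (b * bm) = y * d * (b * bm) := by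
    rw [sub_mul, add_mul, one_mul, mul_assoc (y * d), hee, add_sub_cancel_right]
  -- x' * (y*d*e) = e
  have hA : x' * (y * d * (b * bm)) = b * bm := by
    calc x' * (y * d * (b * bm))
        = x' * ((y * d * (b * bm) + 1 - b * bm) * (b * bm)) := by rw [hxe]
      _ = (x' * (y * d * (b * bm) + 1 - b * bm)) * (b * bm) := (mul_assoc _ _ _).symm
      _ = b * bm := by rw [hx', one_mul]
  -- (1-e) * x = 1-e
  have h0 : (1 - b * bm) * (y * d * (b * bm) + 1 - b * bm) = 1 - b * bm := by
    have heX : (b * bm) * (y * d * (b * bm) + 1 - b * bm) = y * d * (b * bm) := by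
      rw [mul_sub, mul_add, mul_one, hee]
      simp only [← mul_assoc]
      rw [hey, add_sub_cancel_right]
    rw [sub_mul, one_mul, heX]
    abel
  -- (1-e) * x' = 1-e
  have h1e : (1 - b * bm) * x' = 1 - b * bm := by
    calc (1 - b * bm) * x'
        = ((1 - b * bm) * (y * d * (b * bm) + 1 - b * bm)) * x' := by rw [h0]
      _ = (1 - b * bm) * ((y * d * (b * bm) + 1 - b * bm) * x') := mul_assoc _ _ _
      _ = 1 - b * bm := by rw [hx, mul_one]
  -- e * (x'*y) = x'*y
  have hez : b * bm * (x' * y) = x' * y := by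
    have h0y : (1 - b * bm) * (x' * y) = 0 := by
      rw [← mul_assoc, h1e, sub_mul, one_mul, hey, sub_self]
    rw [sub_mul, one_mul] at h0y
    exact (sub_eq_zero.mp h0y).symm
  -- third condition
  have h3 : x' * y * d * b = b := by
    calc x' * y * d * b = x' * y * d * (b * bm * b) := by rw [hbm]
      _ = x' * (y * d * (b * bm)) * b := by noncomm_ring
      _ = b * bm * b := by rw [hA]
      _ = b := hbm
  -- y * d * (x'*y) = y
  have h4y : y * d * (x' * y) = y := by
    calc y * d * (x' * y) = y * d * (b * bm * (x' * y)) := by rw [hez]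
      _ = (y * d * (b * bm)) * (x' * y) := by noncomm_ring
      _ = ((y * d * (b * bm) + 1 - b * bm) * (b * bm)) * (x' * y) := by rw [hxe]
      _ = (y * d * (b * bm) + 1 - b * bm) * (b * bm * (x' * y)) := mul_assoc _ _ _
      _ = (y * d * (b * bm) + 1 - b * bm) * (x' * y) := by rw [hez]
      _ = ((y * d * (b * bm) + 1 - b * bm) * x') * y := (mul_assoc _ _ _).symm
      _ = y := by rw [hx, one_mul]
  -- fourth condition
  have h4 : c * d * (x' * y) = c := by
    calc c * d * (x' * y) = (c * a * y) * d * (x' * y) := by rw [hcay]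
      _ = c * a * (y * d * (x' * y)) := by noncomm_ring
      _ = c * a * y := by rw [h4y]
      _ = c := hcay
  -- second condition
  have h2 : x' * y = x' * y * s * c := by
    calc x' * y = x' * (y * s * c) := by rw [← hs]
      _ = x' * y * s * c := by rw [← mul_assoc, ← mul_assoc]
  exact ⟨⟨bm, hez.symm⟩, ⟨s, h2⟩, h3, h4⟩
end

section
/- Let R be an associative unital ring, let a, b, c, d ∈ R, suppose y is the (b,c)-inverse of a, let c⁻ ∈ R satisfy c·c⁻·c = c, and set f = c⁻·c. Then the following statements are equivalent: (i) d has a (b,c)-inverse; (ii) f ∈ (f·d·y·f)R ∩ R(f·d·y·f); (iii) f·d·y + 1 − f is invertible in R. -/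
/-- with `y = a^{‖(b,c)}` and `f = c⁻·c`, `d` has a (b,c)-inverse iff
`f ∈ (f·d·y·f)R ∩ R(f·d·y·f)` iff `f·d·y + 1 - f` is invertible. -/
theorem d_bc_inverse_tfae' {R : Type*} [Ring R] (a b c d y cm : R)
    (hy : IsBCInverse a b c y) (hcm : c * cm * c = c) :
    List.TFAE
      [ (∃ z, IsBCInverse d b c z),
        (∃ u, cm * c = (cm * c) * d * y * (cm * c) * u) ∧
          (∃ u, cm * c = u * ((cm * c) * d * y * (cm * c))),
        IsUnit ((cm * c) * d * y + 1 - cm * c) ] := by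
  obtain ⟨⟨r, hr⟩, ⟨s, hs⟩, hab, hca⟩ := hy
  have Hab : ∀ x : R, x*y*a*b = x*b := fun x => by
    simpa only [← mul_assoc] using congrArg (x * ·) hab
  have Hca : ∀ x : R, x*c*a*y = x*c := fun x => by
    simpa only [← mul_assoc] using congrArg (x * ·) hca
  have Hcm : ∀ x : R, x*c*cm*c = x*c := fun x => by
    simpa only [← mul_assoc] using congrArg (x * ·) hcm
  have hyf : y*cm*c = y := by
    conv_lhs => rw [hs]
    rw [Hcm, ← hs]
  have Hyf : ∀ x : R, x*y*cm*c = x*y := fun x => by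
    simpa only [← mul_assoc] using congrArg (x * ·) hyf
  have hff : (cm*c)*(cm*c) = cm*c := by
    simp only [← mul_assoc]; rw [Hcm]
  have htf : (cm*c)*d*y*(cm*c) = (cm*c)*d*y := by
    simp only [← mul_assoc]; rw [Hyf]
  have hft : (cm*c)*((cm*c)*d*y) = (cm*c)*d*y := by
    simp only [← mul_assoc]; rw [Hcm]
  tfae_have 1 → 2 := by
    rintro ⟨z, ⟨r', hr'⟩, ⟨s', hs'⟩, hzdb, hcdz⟩
    have Hr' : ∀ x : R, x*b*r'*z = x*z := fun x => by
      simpa only [← mul_assoc] using congrArg (x * ·) hr'.symm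
    have Hcdz : ∀ x : R, x*c*d*z = x*c := fun x => by
      simpa only [← mul_assoc] using congrArg (x * ·) hcdz
    have hzf : z*cm*c = z := by
      conv_lhs => rw [hs']
      rw [Hcm, ← hs']
    have Hzf : ∀ x : R, x*z*cm*c = x*z := fun x => by
      simpa only [← mul_assoc] using congrArg (x * ·) hzf
    have hzdy : z*d*y = y := by
      conv_lhs => rw [hr]
      simp only [← mul_assoc]
      rw [hzdb, ← hr]
    have Hzdy : ∀ x : R, x*z*d*y = x*y := fun x => by
      simpa only [← mul_assoc] using congrArg (x * ·) hzdy
    constructor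
    · refine ⟨a*b*r'*z, ?_⟩
      simp only [← mul_assoc]
      rw [Hyf, Hab, Hr', Hcdz]
    · refine ⟨cm*c*a*z, ?_⟩
      simp only [← mul_assoc]
      rw [Hyf, Hzf, Hzdy, Hca]
  tfae_have 2 → 3 := by
    rintro ⟨⟨u, hu⟩, ⟨v, hv⟩⟩
    rw [htf] at hu hv
    have hvf : v*((cm*c)*d*y*u) = v*(cm*c) := by rw [← hu]
    have hfu : v*((cm*c)*d*y*u) = (cm*c)*u := by rw [← mul_assoc, ← hv]
    have hTw : (cm*c)*d*y*(v*((cm*c)*d*y*u)) = cm*c := by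
      rw [hfu, ← mul_assoc, htf, ← hu]
    have hwT : (v*((cm*c)*d*y*u))*((cm*c)*d*y) = cm*c := by
      rw [hvf, mul_assoc, hft, ← hv]
    have hfw : (cm*c)*(v*((cm*c)*d*y*u)) = v*((cm*c)*d*y*u) := by
      rw [hfu, ← mul_assoc, hff]
    have hwf : (v*((cm*c)*d*y*u))*(cm*c) = v*((cm*c)*d*y*u) := by
      rw [hvf, mul_assoc, hff]
    have expand : ∀ X W F : R, (X + 1 - F)*(W + 1 - F)
        = X*W + X - X*F + W - F*W + F*F - F - F + 1 := fun X W F => by noncomm_ring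
    refine isUnit_iff_exists.mpr ⟨v*((cm*c)*d*y*u) + 1 - cm*c, ?_, ?_⟩
    · rw [expand, hTw, htf, hfw, hff]; abel
    · rw [expand, hwT, hwf, hft, hff]; abel
  tfae_have 3 → 1 := by
    intro hU
    obtain ⟨h, h1, h2⟩ := isUnit_iff_exists.mp hU
    have hfG : (cm*c)*((cm*c)*d*y + 1 - cm*c) = (cm*c)*d*y := by
      have e1 : (cm*c)*((cm*c)*d*y + 1 - cm*c)
          = (cm*c)*((cm*c)*d*y) + cm*c - (cm*c)*(cm*c) := by noncomm_ring
      rw [e1, hft, hff]; abel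
    have hGf : ((cm*c)*d*y + 1 - cm*c)*(cm*c) = (cm*c)*d*y := by
      have e2 : ((cm*c)*d*y + 1 - cm*c)*(cm*c)
          = (cm*c)*d*y*(cm*c) + cm*c - (cm*c)*(cm*c) := by noncomm_ring
      rw [e2, htf, hff]; abel
    have hTh : (cm*c)*d*y*h = cm*c := by
      rw [← hfG, mul_assoc, h1, mul_one]
    have hhT : h*((cm*c)*d*y) = cm*c := by
      rw [← hGf, ← mul_assoc, h2, one_mul]
    have hfh : (cm*c)*h = h*(cm*c) := by
      calc (cm*c)*h = 1*((cm*c)*h) := (one_mul _).symm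
        _ = (h*((cm*c)*d*y + 1 - cm*c))*((cm*c)*h) := by rw [h2]
        _ = h*((((cm*c)*d*y + 1 - cm*c)*(cm*c))*h) := by noncomm_ring
        _ = h*(((cm*c)*d*y)*h) := by rw [hGf]
        _ = h*(((cm*c)*((cm*c)*d*y + 1 - cm*c))*h) := by rw [hfG]
        _ = (h*(cm*c))*(((cm*c)*d*y + 1 - cm*c)*h) := by noncomm_ring
        _ = h*(cm*c) := by rw [h1, mul_one]
    have HhT : ∀ x : R, x*h*cm*c*d*y = x*cm*c := fun x => by
      simpa only [← mul_assoc] using congrArg (x * ·) hhT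
    have HTh : ∀ x : R, x*cm*c*d*y*h = x*cm*c := fun x => by
      simpa only [← mul_assoc] using congrArg (x * ·) hTh
    have Hhf : ∀ x : R, x*h*cm*c = x*cm*c*h := fun x => by
      simpa only [← mul_assoc] using congrArg (x * ·) hfh.symm
    refine ⟨y*h*(cm*c), ⟨r, ?_⟩, ⟨cm, ?_⟩, ?_, ?_⟩
    · simp only [← mul_assoc]
      rw [← hr]
    · simp only [← mul_assoc]
      rw [Hcm]
    · simp only [← mul_assoc]
      rw [← Hab (y*h*cm*c*d), HhT, hyf, hab]
    · simp only [← mul_assoc]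
      rw [Hhf (c*d*y), Hyf]
      conv_rhs => rw [← hcm]
      conv_lhs => rw [← hcm]
      rw [HTh]
  tfae_finish
end

section
/- Let R be an associative unital ring, let a, b, c, d ∈ R, suppose y is the (b,c)-inverse of a, let c⁻ ∈ R satisfy c·c⁻·c = c, and set f = c⁻·c. If x = f·d·y + 1 − f is invertible in R, then y·x⁻¹ is the (b,c)-inverse of d. -/
/-- with `y = a^{‖(b,c)}`, `f = c⁻·c` and `x = f·d·y + 1 - f` invertible
with inverse `x'`, the element `y·x' = y·x⁻¹` is the (b,c)-inverse of `d`. -/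
theorem d_bc_inverse_formula' {R : Type*} [Ring R] (a b c d y cm x' : R)
    (hy : IsBCInverse a b c y) (hcm : c * cm * c = c)
    (hx : ((cm * c) * d * y + 1 - cm * c) * x' = 1)
    (hx' : x' * ((cm * c) * d * y + 1 - cm * c) = 1) :
    IsBCInverse d b c (y * x') := by
  obtain ⟨⟨r, hr⟩, ⟨s, hs⟩, hb, hc⟩ := hy
  set f := cm * c with hfdef
  set x := f * d * y + 1 - f with hxdef
  have hff : f * f = f := by
    have h : f * f = cm * (c * cm * c) := by rw [hfdef]; noncomm_ring
    rw [h, hcm]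
  have hcf : c * f = c := by
    have h : c * f = c * cm * c := by rw [hfdef]; noncomm_ring
    rw [h, hcm]
  have hyf : y * f = y := by
    conv_lhs => rw [hs]
    have h : y * s * c * f = y * s * (c * cm * c) := by rw [hfdef]; noncomm_ring
    rw [h, hcm, ← hs]
  have hfx : f * x = x * f := by
    have h1 : f * x = f * f * d * y + f - f * f := by rw [hxdef]; noncomm_ring
    have h2 : x * f = f * d * (y * f) + f - f * f := by rw [hxdef]; noncomm_ring
    rw [h1, h2, hff, hyf]
  have hfx' : x' * f = f * x' := by
    calc x' * f = x' * f * (x * x') := by rw [hx, mul_one]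
      _ = x' * (f * x) * x' := by noncomm_ring
      _ = x' * (x * f) * x' := by rw [hfx]
      _ = (x' * x) * (f * x') := by noncomm_ring
      _ = f * x' := by rw [hx', one_mul]
  have hyx'f : y * x' * f = y * x' := by
    calc y * x' * f = y * (x' * f) := by noncomm_ring
      _ = (y * f) * x' := by rw [hfx']; noncomm_ring
      _ = y * x' := by rw [hyf]
  have hfdy : f * d * y = x - 1 + f := by rw [hxdef]; noncomm_ring
  refine ⟨⟨r, ?_⟩, ⟨cm, ?_⟩, ?_, ?_⟩
  · conv_lhs => rw [hr]
    noncomm_ring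
  · have h : y * x' * cm * c = y * x' * f := by rw [hfdef]; noncomm_ring
    rw [h, hyx'f]
  · calc y * x' * d * b
        = y * x' * f * d * b := by rw [hyx'f]
      _ = y * x' * f * d * (y * a * b) := by rw [hb]
      _ = y * x' * ((f * d * y) * (a * b)) := by noncomm_ring
      _ = y * x' * ((x - 1 + f) * (a * b)) := by rw [hfdy]
      _ = y * (x' * x) * (a * b) - y * x' * (a * b) + y * (x' * f) * (a * b) := by
            noncomm_ring
      _ = y * (a * b) - y * x' * (a * b) + y * (f * x') * (a * b) := by
            rw [hx', hfx', mul_one]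
      _ = y * (a * b) - y * x' * (a * b) + (y * f) * (x' * (a * b)) := by noncomm_ring
      _ = y * (a * b) := by rw [hyf]; noncomm_ring
      _ = b := by rw [← mul_assoc, hb]
  · have hcx : c * x = c * d * y := by
      have h : c * x = (c * f) * d * y + c - c * f := by rw [hxdef]; noncomm_ring
      rw [h, hcf]; noncomm_ring
    calc c * d * (y * x') = (c * d * y) * x' := by noncomm_ring
      _ = c * (x * x') := by rw [← hcx]; noncomm_ring
      _ = c := by rw [hx, mul_one]
end

section
/- Let R be an associative unital ring, let a, b, c, d ∈ R, suppose y is the (b,c)-inverse of a and z is the (b,c)-inverse of d, let b⁻, c⁻ ∈ R satisfy b·b⁻·b = b and c·c⁻·c = c, and set e = b·b⁻ and f = c⁻·c. Then (y·d·e + 1 − e)·(z·a·e + 1 − e) = 1, (z·a·e + 1 − e)·(y·d·e + 1 − e) = 1, (f·d·y + 1 − f)·(f·a·z + 1 − f) = 1, and (f·a·z + 1 − f)·(f·d·y + 1 − f) = 1. -/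
private lemma aux_inv {R : Type*} [Ring R] (P Q E : R) (hE : E * E = E)
    (hPE : P * E = P) (hEQ : E * Q = Q) (hPQ : P * Q = E) :
    (P + 1 - E) * (Q + 1 - E) = 1 := by
  have h : (P + 1 - E) * (Q + 1 - E)
      = P * Q + (P - P * E) + (Q - E * Q) + (E * E - E) + 1 - E := by noncomm_ring
  rw [h, hPE, hEQ, hPQ, hE]
  abel

/-- if `y = a^{‖(b,c)}`, `z = d^{‖(b,c)}`, `e = b·b⁻`, `f = c⁻·c`, then
`(y·d·e + 1 - e)` and `(z·a·e + 1 - e)` are mutually inverse, and so are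
`(f·d·y + 1 - f)` and `(f·a·z + 1 - f)`. -/
theorem mutual_inverses {R : Type*} [Ring R] (a b c d y z bm cm : R)
    (hy : IsBCInverse a b c y) (hz : IsBCInverse d b c z)
    (hbm : b * bm * b = b) (hcm : c * cm * c = c) :
    (y * d * (b * bm) + 1 - b * bm) * (z * a * (b * bm) + 1 - b * bm) = 1 ∧
    (z * a * (b * bm) + 1 - b * bm) * (y * d * (b * bm) + 1 - b * bm) = 1 ∧
    ((cm * c) * d * y + 1 - cm * c) * ((cm * c) * a * z + 1 - cm * c) = 1 ∧
    ((cm * c) * a * z + 1 - cm * c) * ((cm * c) * d * y + 1 - cm * c) = 1 := by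
  obtain ⟨⟨r, hy1⟩, ⟨s, hy2⟩, hy3, hy4⟩ := hy
  obtain ⟨⟨r', hz1⟩, ⟨s', hz2⟩, hz3, hz4⟩ := hz
  -- e = b*bm absorbs z and y on the left
  have hez : b * bm * z = z := by
    conv_lhs => rw [hz1]
    rw [show b * bm * (b * r' * z) = b * bm * b * r' * z from by noncomm_ring, hbm]
    exact hz1.symm
  have hey : b * bm * y = y := by
    conv_lhs => rw [hy1]
    rw [show b * bm * (b * r * y) = b * bm * b * r * y from by noncomm_ring, hbm]
    exact hy1.symm
  -- f = cm*c absorbs y and z on the right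
  have hyf : y * (cm * c) = y := by
    conv_lhs => rw [hy2]
    rw [show y * s * c * (cm * c) = y * s * (c * cm * c) from by noncomm_ring, hcm]
    exact hy2.symm
  have hzf : z * (cm * c) = z := by
    conv_lhs => rw [hz2]
    rw [show z * s' * c * (cm * c) = z * s' * (c * cm * c) from by noncomm_ring, hcm]
    exact hz2.symm
  -- cross identities
  have hydz : y * d * z = y := by
    conv_lhs => rw [hy2]
    rw [show y * s * c * d * z = y * s * (c * d * z) from by noncomm_ring, hz4]
    exact hy2.symm
  have hzay : z * a * y = z := by
    conv_lhs => rw [hz2]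
    rw [show z * s' * c * a * y = z * s' * (c * a * y) from by noncomm_ring, hy4]
    exact hz2.symm
  have hyaz : y * a * z = z := by
    conv_lhs => rw [hz1]
    rw [show y * a * (b * r' * z) = y * a * b * r' * z from by noncomm_ring, hy3]
    exact hz1.symm
  have hzdy : z * d * y = y := by
    conv_lhs => rw [hy1]
    rw [show z * d * (b * r * y) = z * d * b * r * y from by noncomm_ring, hz3]
    exact hy1.symm
  have hE : (b * bm) * (b * bm) = b * bm := by
    rw [show b * bm * (b * bm) = (b * bm * b) * bm from by noncomm_ring, hbm]
  have hF : (cm * c) * (cm * c) = cm * c := by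
    rw [show cm * c * (cm * c) = cm * (c * cm * c) from by noncomm_ring, hcm]
  refine ⟨?_, ?_, ?_, ?_⟩
  · refine aux_inv _ _ _ hE ?_ ?_ ?_
    · rw [mul_assoc, hE]
    · rw [show b * bm * (z * a * (b * bm)) = (b * bm * z) * a * (b * bm) from by noncomm_ring,
        hez]
    · rw [show y * d * (b * bm) * (z * a * (b * bm))
          = (y * d) * (b * bm * z) * (a * (b * bm)) from by noncomm_ring, hez,
        show y * d * z * (a * (b * bm)) = (y * d * z) * a * b * bm from by noncomm_ring,
        hydz, hy3]
  · refine aux_inv _ _ _ hE ?_ ?_ ?_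
    · rw [mul_assoc, hE]
    · rw [show b * bm * (y * d * (b * bm)) = (b * bm * y) * d * (b * bm) from by noncomm_ring,
        hey]
    · rw [show z * a * (b * bm) * (y * d * (b * bm))
          = (z * a) * (b * bm * y) * (d * (b * bm)) from by noncomm_ring, hey,
        show z * a * y * (d * (b * bm)) = (z * a * y) * d * b * bm from by noncomm_ring,
        hzay, hz3]
  · refine aux_inv _ _ _ hF ?_ ?_ ?_
    · rw [show cm * c * d * y * (cm * c) = (cm * c * d) * (y * (cm * c)) from by noncomm_ring,
        hyf]
    · rw [show cm * c * (cm * c * a * z) = ((cm * c) * (cm * c)) * a * z from by noncomm_ring,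
        hF]
    · rw [show cm * c * d * y * (cm * c * a * z)
          = (cm * c * d) * (y * (cm * c)) * (a * z) from by noncomm_ring, hyf,
        show cm * c * d * y * (a * z) = cm * (c * d * (y * a * z)) from by noncomm_ring,
        hyaz, show cm * (c * d * z) = cm * (c * d * z) from rfl]
      rw [hz4]
  · refine aux_inv _ _ _ hF ?_ ?_ ?_
    · rw [show cm * c * a * z * (cm * c) = (cm * c * a) * (z * (cm * c)) from by noncomm_ring,
        hzf]
    · rw [show cm * c * (cm * c * d * y) = ((cm * c) * (cm * c)) * d * y from by noncomm_ring,
        hF]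
    · rw [show cm * c * a * z * (cm * c * d * y)
          = (cm * c * a) * (z * (cm * c)) * (d * y) from by noncomm_ring, hzf,
        show cm * c * a * z * (d * y) = cm * (c * a * (z * d * y)) from by noncomm_ring,
        hzdy, hy4]
end

section
/- Let R be an associative unital ring, let p, q ∈ R be idempotents, and suppose a ∈ R has an image-kernel (p,q)-inverse x. Then for d ∈ R the following statements are equivalent: (i) d has an image-kernel (p,q)-inverse; (ii) 1 − p + x·d·p is invertible in R; (iii) q + (1 − q)·d·x is invertible in R. -/
def IsImageKernelInverse {R : Type*} [Ring R] (p q a x : R) : Prop :=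
  x * a * x = x ∧ ({t : R | ∃ u, t = x * a * u} = {t : R | ∃ u, t = p * u}) ∧
    ({t : R | ∃ u, t = (1 - a * x) * u} = {t : R | ∃ u, t = q * u})

section aux
variable {R : Type*} [Ring R]

private lemma mem_of_rset_eq {e f : R}
    (h : {t : R | ∃ u, t = e * u} = {t : R | ∃ u, t = f * u}) :
    (∃ s, e = f * s) ∧ (∃ t, f = e * t) := by
  constructor
  · have he : e ∈ {t : R | ∃ u, t = e * u} := ⟨1, (mul_one e).symm⟩
    rw [h] at he; exact he
  · have hf : f ∈ {t : R | ∃ u, t = f * u} := ⟨1, (mul_one f).symm⟩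
    rw [← h] at hf; exact hf

private lemma rset_eq_of {e f : R} (h1 : ∃ s, e = f * s) (h2 : ∃ t, f = e * t) :
    {t : R | ∃ u, t = e * u} = {t : R | ∃ u, t = f * u} := by
  obtain ⟨s, hs⟩ := h1; obtain ⟨t, ht⟩ := h2
  ext z
  constructor
  · rintro ⟨u, rfl⟩; exact ⟨s * u, by rw [hs, mul_assoc]⟩
  · rintro ⟨u, rfl⟩; exact ⟨t * u, by rw [ht, mul_assoc]⟩

private lemma key_facts {p q a x : R} (hp : p * p = p) (hq : q * q = q)
    (hx : IsImageKernelInverse p q a x) :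
    x * a * p = p ∧ p * x = x ∧ x * q = 0 ∧ (1 - q) * (a * x) = 1 - q := by
  obtain ⟨hxax, hs1, hs2⟩ := hx
  obtain ⟨⟨s, hs⟩, ⟨t, ht⟩⟩ := mem_of_rset_eq hs1
  obtain ⟨⟨s', hs'⟩, ⟨t', ht'⟩⟩ := mem_of_rset_eq hs2
  have hxap : x * a * p = p := by
    conv_lhs => rw [ht]
    calc x * a * (x * a * t) = (x * a * x) * (a * t) := by noncomm_ring
    _ = x * (a * t) := by rw [hxax]
    _ = x * a * t := by noncomm_ring
    _ = p := ht.symm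
  have hpxa : p * (x * a) = x * a := by rw [hs, ← mul_assoc, hp]
  have hpx : p * x = x := by
    conv_lhs => rw [← hxax]
    calc p * (x * a * x) = (p * (x * a)) * x := by noncomm_ring
    _ = (x * a) * x := by rw [hpxa]
    _ = x := hxax
  have h1ax : (1 - a * x) * (1 - a * x) = 1 - a * x := by
    have haxax : a * x * (a * x) = a * x := by
      calc a * x * (a * x) = a * (x * a * x) := by noncomm_ring
      _ = a * x := by rw [hxax]
    calc (1 - a * x) * (1 - a * x) = 1 - a * x - a * x + a * x * (a * x) := by noncomm_ring
    _ = 1 - a * x := by rw [haxax]; abel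
  have h1axq : (1 - a * x) * q = q := by
    conv_lhs => rw [ht']
    rw [← mul_assoc, h1ax, ← ht']
  have hxq : x * q = 0 := by
    have haxq : a * x * q = 0 := by
      have h := h1axq
      rw [sub_mul, one_mul] at h
      exact sub_eq_self.mp h
    calc x * q = (x * a * x) * q := by rw [hxax]
    _ = x * (a * x * q) := by noncomm_ring
    _ = 0 := by rw [haxq, mul_zero]
  have hq1ax : q * (1 - a * x) = 1 - a * x := by rw [hs', ← mul_assoc, hq]
  have h1qax : (1 - q) * (a * x) = 1 - q := by
    have h : q - q * (a * x) = 1 - a * x := by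
      rw [← hq1ax]; noncomm_ring
    have e : q * (a * x) = q - (1 - a * x) := by
      calc q * (a * x) = q - (q - q * (a * x)) := by abel
      _ = q - (1 - a * x) := by rw [h]
    calc (1 - q) * (a * x) = a * x - q * (a * x) := by noncomm_ring
    _ = a * x - (q - (1 - a * x)) := by rw [e]
    _ = 1 - q := by abel
  exact ⟨hxap, hpx, hxq, h1qax⟩

end aux

/-- for idempotents `p, q` and `x` an image-kernel (p,q)-inverse of `a`,
`d` has an image-kernel (p,q)-inverse iff `1 - p + x·d·p` is invertible iff
`q + (1 - q)·d·x` is invertible. -/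
theorem image_kernel_inverse_tfae {R : Type*} [Ring R] (p q a x d : R)
    (hp : p * p = p) (hq : q * q = q) (hx : IsImageKernelInverse p q a x) :
    List.TFAE
      [ (∃ w, IsImageKernelInverse p q d w),
        IsUnit (1 - p + x * d * p),
        IsUnit (q + (1 - q) * d * x) ] := by
  obtain ⟨hxap, hpx, hxq, h1qax⟩ := key_facts hp hq hx
  have hxax : x * a * x = x := hx.1
  have hx1q : x * (1 - q) = x := by rw [mul_sub, mul_one, hxq, sub_zero]
  have hq1q0 : q * (1 - q) = 0 := by rw [mul_sub, mul_one, hq, sub_self]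
  have h1qq0 : (1 - q) * q = 0 := by rw [sub_mul, one_mul, hq, sub_self]
  have h1q1q : (1 - q) * (1 - q) = 1 - q := by
    rw [mul_sub, mul_one, h1qq0, sub_zero]
  tfae_have 1 → 2 := by
    rintro ⟨w, hw⟩
    obtain ⟨hwdp, hpw, hwq, h1qdw⟩ := key_facts hp hq hw
    have hw1q : w * (1 - q) = w := by rw [mul_sub, mul_one, hwq, sub_zero]
    have hxdw : x * d * w = x := by
      conv_lhs => rw [← hx1q]
      calc x * (1 - q) * d * w = x * ((1 - q) * (d * w)) := by noncomm_ring
      _ = x * (1 - q) := by rw [h1qdw]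
      _ = x := hx1q
    have hwax : w * a * x = w := by
      conv_lhs => rw [← hw1q]
      calc w * (1 - q) * a * x = w * ((1 - q) * (a * x)) := by noncomm_ring
      _ = w * (1 - q) := by rw [h1qax]
      _ = w := hw1q
    have e1 : p * (w * a * p) = w * a * p := by
      calc p * (w * a * p) = (p * w) * (a * p) := by noncomm_ring
      _ = w * (a * p) := by rw [hpw]
      _ = w * a * p := by noncomm_ring
    have e2 : p * (x * d * p) = x * d * p := by
      calc p * (x * d * p) = (p * x) * (d * p) := by noncomm_ring
      _ = x * (d * p) := by rw [hpx]
      _ = x * d * p := by noncomm_ring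
    have e3 : (x * d * p) * (w * a * p) = p := by
      calc (x * d * p) * (w * a * p) = (x * d * (p * w)) * (a * p) := by noncomm_ring
      _ = (x * d * w) * (a * p) := by rw [hpw]
      _ = x * (a * p) := by rw [hxdw]
      _ = x * a * p := by noncomm_ring
      _ = p := hxap
    have e4 : (w * a * p) * (x * d * p) = p := by
      calc (w * a * p) * (x * d * p) = (w * a * (p * x)) * (d * p) := by noncomm_ring
      _ = (w * a * x) * (d * p) := by rw [hpx]
      _ = w * (d * p) := by rw [hwax]
      _ = w * d * p := by noncomm_ring
      _ = p := hwdp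
    refine ⟨⟨1 - p + x * d * p, 1 - p + w * a * p, ?_, ?_⟩, rfl⟩
    · calc (1 - p + x * d * p) * (1 - p + w * a * p)
          = 1 - p + (w * a * p) - p + p * p - p * (w * a * p) + (x * d * p)
            - (x * d * p) * p + (x * d * p) * (w * a * p) := by noncomm_ring
      _ = 1 - p + (w * a * p) - p + p - (w * a * p) + (x * d * p)
            - (x * d * p) + p := by
          rw [hp, e1, e3, show (x * d * p) * p = x * d * (p * p) from by noncomm_ring, hp,
            show x * d * p = x * d * p from rfl]
      _ = 1 := by abel
    · calc (1 - p + w * a * p) * (1 - p + x * d * p)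
          = 1 - p + (x * d * p) - p + p * p - p * (x * d * p) + (w * a * p)
            - (w * a * p) * p + (w * a * p) * (x * d * p) := by noncomm_ring
      _ = 1 - p + (x * d * p) - p + p - (x * d * p) + (w * a * p)
            - (w * a * p) + p := by
          rw [hp, e2, e4, show (w * a * p) * p = w * a * (p * p) from by noncomm_ring, hp]
      _ = 1 := by abel
  tfae_have 1 → 3 := by
    rintro ⟨w, hw⟩
    obtain ⟨hwdp, hpw, hwq, h1qdw⟩ := key_facts hp hq hw
    have hw1q : w * (1 - q) = w := by rw [mul_sub, mul_one, hwq, sub_zero]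
    have hxaw : x * a * w = w := by
      calc x * a * w = x * a * (p * w) := by rw [hpw]
      _ = (x * a * p) * w := by noncomm_ring
      _ = p * w := by rw [hxap]
      _ = w := hpw
    have hwdx : w * d * x = x := by
      calc w * d * x = w * d * (p * x) := by rw [hpx]
      _ = (w * d * p) * x := by noncomm_ring
      _ = p * x := by rw [hwdp]
      _ = x := hpx
    have f1 : ((1 - q) * d * x) * (q + (1 - q) * a * w) = 1 - q := by
      calc ((1 - q) * d * x) * (q + (1 - q) * a * w)
          = (1 - q) * d * (x * q) + ((1 - q) * d) * ((x * (1 - q)) * (a * w)) := by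
            noncomm_ring
      _ = (1 - q) * d * (x * q) + ((1 - q) * d) * (x * (a * w)) := by rw [hx1q]
      _ = (1 - q) * d * 0 + ((1 - q) * d) * (x * a * w) := by
            rw [hxq, show x * (a * w) = x * a * w from (mul_assoc x a w).symm]
      _ = ((1 - q) * d) * w := by rw [hxaw, mul_zero, zero_add]
      _ = (1 - q) * (d * w) := by noncomm_ring
      _ = 1 - q := h1qdw
    have f2 : ((1 - q) * a * w) * (q + (1 - q) * d * x) = 1 - q := by
      calc ((1 - q) * a * w) * (q + (1 - q) * d * x)
          = (1 - q) * a * (w * q) + ((1 - q) * a) * ((w * (1 - q)) * (d * x)) := by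
            noncomm_ring
      _ = (1 - q) * a * (w * q) + ((1 - q) * a) * (w * (d * x)) := by rw [hw1q]
      _ = (1 - q) * a * 0 + ((1 - q) * a) * (w * d * x) := by
            rw [hwq, show w * (d * x) = w * d * x from (mul_assoc w d x).symm]
      _ = ((1 - q) * a) * x := by rw [hwdx, mul_zero, zero_add]
      _ = (1 - q) * (a * x) := by noncomm_ring
      _ = 1 - q := h1qax
    refine ⟨⟨q + (1 - q) * d * x, q + (1 - q) * a * w, ?_, ?_⟩, rfl⟩
    · calc (q + (1 - q) * d * x) * (q + (1 - q) * a * w)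
          = q * q + (q * (1 - q)) * (a * w)
            + ((1 - q) * d * x) * (q + (1 - q) * a * w) := by noncomm_ring
      _ = q + 0 * (a * w) + (1 - q) := by rw [hq, hq1q0, f1]
      _ = 1 := by rw [zero_mul]; abel
    · calc (q + (1 - q) * a * w) * (q + (1 - q) * d * x)
          = q * q + (q * (1 - q)) * (d * x)
            + ((1 - q) * a * w) * (q + (1 - q) * d * x) := by noncomm_ring
      _ = q + 0 * (d * x) + (1 - q) := by rw [hq, hq1q0, f2]
      _ = 1 := by rw [zero_mul]; abel
  tfae_have 2 → 1 := by
    rintro ⟨U, hU⟩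
    set c : R := ↑U⁻¹ with hc
    have huc : (1 - p + x * d * p) * c = 1 := by rw [← hU]; exact U.mul_inv
    have hcu : c * (1 - p + x * d * p) = 1 := by rw [← hU]; exact U.inv_mul
    have hup : (1 - p + x * d * p) * p = x * d * p := by
      calc (1 - p + x * d * p) * p = p - p * p + x * d * (p * p) := by noncomm_ring
      _ = p - p + x * d * p := by rw [hp]
      _ = x * d * p := by abel
    have hpu : p * (1 - p + x * d * p) = x * d * p := by
      calc p * (1 - p + x * d * p) = p - p * p + (p * x) * (d * p) := by noncomm_ring
      _ = p - p + x * (d * p) := by rw [hp, hpx]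
      _ = x * d * p := by rw [← mul_assoc]; abel
    have hpc : p * c = c * p := by
      calc p * c = (c * (1 - p + x * d * p)) * p * c := by rw [hcu, one_mul]
      _ = c * ((1 - p + x * d * p) * p) * c := by noncomm_ring
      _ = c * (x * d * p) * c := by rw [hup]
      _ = c * (p * (1 - p + x * d * p)) * c := by conv_lhs => rw [← hpu]
      _ = c * p * ((1 - p + x * d * p) * c) := by noncomm_ring
      _ = c * p := by rw [huc, mul_one]
    have hu1p : (1 - p + x * d * p) * (1 - p) = 1 - p := by
      calc (1 - p + x * d * p) * (1 - p)
          = 1 - p - p + p * p + x * d * p - x * d * (p * p) := by noncomm_ring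
      _ = 1 - p - p + p + x * d * p - x * d * p := by rw [hp]
      _ = 1 - p := by abel
    have hc1p : c * (1 - p) = 1 - p := by
      conv_lhs => rw [← hu1p]
      rw [← mul_assoc, hcu, one_mul]
    have hcdec : c = 1 - p + c * p := by
      have h : c - c * p = 1 - p := by
        rw [← hc1p]; noncomm_ring
      calc c = c - c * p + c * p := by abel
      _ = 1 - p + c * p := by rw [h]
    have hxdcx : x * d * (c * x) = x := by
      conv_lhs => rw [hcdec]
      calc x * d * ((1 - p + c * p) * x)
          = x * (d * x) - x * (d * (p * x)) + x * d * ((c * p) * x) := by noncomm_ring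
      _ = x * (d * x) - x * (d * x) + x * d * ((p * c) * x) := by rw [hpx, ← hpc]
      _ = x * d * ((p * c) * x) := by abel
      _ = (x * d * p) * (c * x) := by noncomm_ring
      _ = ((1 - p + x * d * p) * p) * (c * x) := by rw [hup]
      _ = (1 - p + x * d * p) * ((p * c) * x) := by noncomm_ring
      _ = (1 - p + x * d * p) * ((c * p) * x) := by rw [hpc]
      _ = ((1 - p + x * d * p) * c) * (p * x) := by noncomm_ring
      _ = 1 * (p * x) := by rw [huc]
      _ = x := by rw [one_mul, hpx]
    have hpcx : p * (c * x) = c * x := by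
      calc p * (c * x) = (p * c) * x := by noncomm_ring
      _ = (c * p) * x := by rw [hpc]
      _ = c * (p * x) := by noncomm_ring
      _ = c * x := by rw [hpx]
    have hcxdp : (c * x) * d * p = p := by
      calc (c * x) * d * p = c * (x * d * p) := by noncomm_ring
      _ = c * ((1 - p + x * d * p) * p) := by rw [hup]
      _ = (c * (1 - p + x * d * p)) * p := by noncomm_ring
      _ = 1 * p := by rw [hcu]
      _ = p := one_mul p
    have h1qdcx : (1 - q) * (d * (c * x)) = 1 - q := by
      conv_lhs => rw [← h1qax]
      calc ((1 - q) * (a * x)) * (d * (c * x)) = (1 - q) * (a * (x * d * (c * x))) := by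
            noncomm_ring
      _ = (1 - q) * (a * x) := by rw [hxdcx]
      _ = 1 - q := h1qax
    have hdcxq : d * (c * x) * q = 0 := by
      calc d * (c * x) * q = d * (c * (x * q)) := by noncomm_ring
      _ = 0 := by rw [hxq, mul_zero, mul_zero]
    refine ⟨c * x, ?_, ?_, ?_⟩
    · calc (c * x) * d * (c * x) = c * (x * d * (c * x)) := by noncomm_ring
      _ = c * x := by rw [hxdcx]
    · refine rset_eq_of ⟨(c * x) * d, ?_⟩ ⟨p, ?_⟩
      · calc (c * x) * d = (p * (c * x)) * d := by rw [hpcx]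
        _ = p * ((c * x) * d) := by noncomm_ring
      · exact hcxdp.symm
    · refine rset_eq_of ⟨1 - d * (c * x), ?_⟩ ⟨q, ?_⟩
      · have e0 : (1 - d * (c * x)) - q * (1 - d * (c * x)) = 0 := by
          calc (1 - d * (c * x)) - q * (1 - d * (c * x))
              = (1 - q) * (1 - d * (c * x)) := by noncomm_ring
          _ = (1 - q) - (1 - q) * (d * (c * x)) := by noncomm_ring
          _ = 0 := by rw [h1qdcx, sub_self]
        have := sub_eq_zero.mp e0
        exact this
      · calc q = q - 0 := by rw [sub_zero]
        _ = q - d * (c * x) * q := by rw [hdcxq]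
        _ = (1 - d * (c * x)) * q := by noncomm_ring
  tfae_have 3 → 1 := by
    rintro ⟨U, hU⟩
    set c : R := ↑U⁻¹ with hc
    have hvc : (q + (1 - q) * d * x) * c = 1 := by rw [← hU]; exact U.mul_inv
    have hcv : c * (q + (1 - q) * d * x) = 1 := by rw [← hU]; exact U.inv_mul
    have hvq : (q + (1 - q) * d * x) * q = q := by
      calc (q + (1 - q) * d * x) * q = q * q + (1 - q) * d * (x * q) := by noncomm_ring
      _ = q := by rw [hq, hxq, mul_zero, add_zero]
    have hcq : c * q = q := by
      conv_lhs => rw [← hvq]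
      rw [← mul_assoc, hcv, one_mul]
    have hqv : q * (q + (1 - q) * d * x) = q := by
      calc q * (q + (1 - q) * d * x) = q * q + (q * (1 - q)) * (d * x) := by noncomm_ring
      _ = q := by rw [hq, hq1q0, zero_mul, add_zero]
    have h1qv : (1 - q) * (q + (1 - q) * d * x) = (1 - q) * (d * x) := by
      calc (1 - q) * (q + (1 - q) * d * x)
          = (1 - q) * q + ((1 - q) * (1 - q)) * (d * x) := by noncomm_ring
      _ = (1 - q) * (d * x) := by rw [h1qq0, h1q1q, zero_add]
    have hwdx : (x * c * (1 - q)) * d * x = x := by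
      calc (x * c * (1 - q)) * d * x = (x * c) * ((1 - q) * (d * x)) := by noncomm_ring
      _ = (x * c) * ((1 - q) * (q + (1 - q) * d * x)) := by rw [h1qv]
      _ = (x * c) * ((q + (1 - q) * d * x) - q * (q + (1 - q) * d * x)) := by noncomm_ring
      _ = (x * c) * ((q + (1 - q) * d * x) - q) := by rw [hqv]
      _ = x * (c * (q + (1 - q) * d * x)) - x * (c * q) := by noncomm_ring
      _ = x * 1 - x * q := by rw [hcv, hcq]
      _ = x := by rw [mul_one, hxq, sub_zero]
    have hwdp : (x * c * (1 - q)) * d * p = p := by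
      conv_lhs => rw [← hxap]
      calc (x * c * (1 - q)) * d * (x * a * p)
          = ((x * c * (1 - q)) * d * x) * (a * p) := by noncomm_ring
      _ = x * (a * p) := by rw [hwdx]
      _ = x * a * p := by noncomm_ring
      _ = p := hxap
    have hpw : p * (x * c * (1 - q)) = x * c * (1 - q) := by
      calc p * (x * c * (1 - q)) = (p * x) * (c * (1 - q)) := by noncomm_ring
      _ = x * (c * (1 - q)) := by rw [hpx]
      _ = x * c * (1 - q) := by noncomm_ring
    have hdwq : d * (x * c * (1 - q)) * q = 0 := by
      calc d * (x * c * (1 - q)) * q = d * (x * (c * ((1 - q) * q))) := by noncomm_ring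
      _ = 0 := by rw [h1qq0, mul_zero, mul_zero, mul_zero]
    have h1qdw : (1 - q) * (d * (x * c * (1 - q))) = 1 - q := by
      calc (1 - q) * (d * (x * c * (1 - q)))
          = ((1 - q) * (d * x)) * (c * (1 - q)) := by noncomm_ring
      _ = ((1 - q) * (q + (1 - q) * d * x)) * (c * (1 - q)) := by rw [h1qv]
      _ = (1 - q) * (((q + (1 - q) * d * x)) * c) * (1 - q) := by noncomm_ring
      _ = (1 - q) * 1 * (1 - q) := by rw [hvc]
      _ = 1 - q := by rw [mul_one, h1q1q]
    refine ⟨x * c * (1 - q), ?_, ?_, ?_⟩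
    · calc (x * c * (1 - q)) * d * (x * c * (1 - q))
          = ((x * c * (1 - q)) * d * x) * (c * (1 - q)) := by noncomm_ring
      _ = x * (c * (1 - q)) := by rw [hwdx]
      _ = x * c * (1 - q) := by noncomm_ring
    · refine rset_eq_of ⟨(x * c * (1 - q)) * d, ?_⟩ ⟨p, ?_⟩
      · calc (x * c * (1 - q)) * d = (p * (x * c * (1 - q))) * d := by rw [hpw]
        _ = p * ((x * c * (1 - q)) * d) := by noncomm_ring
      · exact hwdp.symm
    · refine rset_eq_of ⟨1 - d * (x * c * (1 - q)), ?_⟩ ⟨q, ?_⟩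
      · have e0 : (1 - d * (x * c * (1 - q))) - q * (1 - d * (x * c * (1 - q))) = 0 := by
          calc (1 - d * (x * c * (1 - q))) - q * (1 - d * (x * c * (1 - q)))
              = (1 - q) - (1 - q) * (d * (x * c * (1 - q))) := by noncomm_ring
          _ = 0 := by rw [h1qdw, sub_self]
        exact sub_eq_zero.mp e0
      · calc q = q - 0 := by rw [sub_zero]
        _ = q - d * (x * c * (1 - q)) * q := by rw [hdwq]
        _ = (1 - d * (x * c * (1 - q))) * q := by noncomm_ring
  tfae_finish
end

section
/- Let R be an associative unital ring, let a, b, c, d ∈ R, and suppose y is the (b,c)-inverse of a and z is the (b,c)-inverse of d. Then z = z·a·y = y·a·z and y = y·d·z = z·d·y. -/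
/-- if `y = a^{‖(b,c)}` and `z = d^{‖(b,c)}`, then
`z = z·a·y = y·a·z` and `y = y·d·z = z·d·y`. -/
theorem bc_inverse_absorption {R : Type*} [Ring R] (a b c d y z : R)
    (hy : IsBCInverse a b c y) (hz : IsBCInverse d b c z) :
    z = z * a * y ∧ z = y * a * z ∧ y = y * d * z ∧ y = z * d * y := by
  obtain ⟨⟨r, hr⟩, ⟨s, hs⟩, hab, hca⟩ := hy
  obtain ⟨⟨r', hr'⟩, ⟨s', hs'⟩, hdb, hcd⟩ := hz
  refine ⟨?_, ?_, ?_, ?_⟩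
  · conv_lhs => rw [hs']
    calc z * s' * c = z * s' * (c * a * y) := by rw [hca]
      _ = z * s' * c * a * y := by noncomm_ring
      _ = z * a * y := by rw [← hs']
  · conv_lhs => rw [hr']
    calc b * r' * z = (y * a * b) * r' * z := by rw [hab]
      _ = y * a * (b * r' * z) := by noncomm_ring
      _ = y * a * z := by rw [← hr']
  · conv_lhs => rw [hs]
    calc y * s * c = y * s * (c * d * z) := by rw [hcd]
      _ = y * s * c * d * z := by noncomm_ring
      _ = y * d * z := by rw [← hs]
  · conv_lhs => rw [hr]
    calc b * r * y = (z * d * b) * r * y := by rw [hdb]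
      _ = z * d * (b * r * y) := by noncomm_ring
      _ = z * d * y := by rw [← hr]
end

section
/- Let R be an associative unital ring, let a, b, c, d ∈ R, suppose y is the (b,c)-inverse of a and z is the (b,c)-inverse of d, let b⁻, c⁻ ∈ R satisfy b·b⁻·b = b and c·c⁻·c = c, and set e = b·b⁻ and f = c⁻·c. Then e = e·z·a·y·d·e = e·y·a·e = e·z·d·e and f = f·d·y·a·z·f = f·d·z·f = f·a·y·f. -/
/-- if `y = a^{‖(b,c)}`, `z = d^{‖(b,c)}`, `e = b·b⁻`, `f = c⁻·c`, then
`e = e·z·a·y·d·e = e·y·a·e = e·z·d·e` and `f = f·d·y·a·z·f = f·d·z·f = f·a·y·f`. -/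
theorem bc_idempotent_identities {R : Type*} [Ring R] (a b c d y z bm cm : R)
    (hy : IsBCInverse a b c y) (hz : IsBCInverse d b c z)
    (hbm : b * bm * b = b) (hcm : c * cm * c = c) :
    (b * bm = (b * bm) * z * a * y * d * (b * bm) ∧
     b * bm = (b * bm) * y * a * (b * bm) ∧
     b * bm = (b * bm) * z * d * (b * bm)) ∧
    (cm * c = (cm * c) * d * y * a * z * (cm * c) ∧
     cm * c = (cm * c) * d * z * (cm * c) ∧
     cm * c = (cm * c) * a * y * (cm * c)) := by
  obtain ⟨⟨r, hr⟩, ⟨s, hs⟩, hyab, hcay⟩ := hy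
  obtain ⟨⟨r', hr'⟩, ⟨s', hs'⟩, hzdb, hcdz⟩ := hz
  have hzay : z * a * y = z := by
    conv_lhs => rw [hs']
    rw [show z * s' * c * a * y = z * s' * (c * a * y) by noncomm_ring, hcay, ← hs']
  have hyaz : y * a * z = z := by
    conv_lhs => rw [hr']
    rw [show y * a * (b * r' * z) = y * a * b * (r' * z) by noncomm_ring, hyab,
      show b * (r' * z) = b * r' * z by noncomm_ring, ← hr']
  refine ⟨⟨?_, ?_, ?_⟩, ?_, ?_, ?_⟩
  · calc b * bm = b * bm * (z * d * b) * bm := by rw [hzdb, hbm]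
      _ = b * bm * (z * a * y) * d * (b * bm) := by rw [hzay]; noncomm_ring
      _ = (b * bm) * z * a * y * d * (b * bm) := by noncomm_ring
  · calc b * bm = b * bm * (y * a * b) * bm := by rw [hyab, hbm]
      _ = (b * bm) * y * a * (b * bm) := by noncomm_ring
  · calc b * bm = b * bm * (z * d * b) * bm := by rw [hzdb, hbm]
      _ = (b * bm) * z * d * (b * bm) := by noncomm_ring
  · calc cm * c = cm * (c * d * z) * (cm * c) := by rw [hcdz]; rw [show cm * c * (cm * c) = cm * (c * cm * c) by noncomm_ring, hcm]
      _ = cm * (c * d * (y * a * z)) * (cm * c) := by rw [hyaz]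
      _ = (cm * c) * d * y * a * z * (cm * c) := by noncomm_ring
  · calc cm * c = cm * (c * d * z) * (cm * c) := by rw [hcdz]; rw [show cm * c * (cm * c) = cm * (c * cm * c) by noncomm_ring, hcm]
      _ = (cm * c) * d * z * (cm * c) := by noncomm_ring
  · calc cm * c = cm * (c * a * y) * (cm * c) := by rw [hcay]; rw [show cm * c * (cm * c) = cm * (c * cm * c) by noncomm_ring, hcm]
      _ = (cm * c) * a * y * (cm * c) := by noncomm_ring
end

section
/- Let R be an associative unital ring, let a, b, c, d ∈ R, and suppose y is the (b,c)-inverse of a and z is the (b,c)-inverse of d. Then the following statements are equivalent: (i) a·y = d·z; (ii) a·y·d·z = d·z·a·y; (iii) a·z·d·y = d·y·a·z; (iv) a·z is group invertible with group inverse d·y; (v) d·y is group invertible with group inverse a·z. -/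
/-- `x` is the group inverse of `w`. -/
def IsGroupInverse {R : Type*} [Ring R] (w x : R) : Prop :=
  w * x * w = w ∧ x * w * x = x ∧ w * x = x * w

/-- characterizations of `a·y = d·z` for the (b,c)-inverses `y` of `a`
and `z` of `d`. -/
theorem equal_right_bc_idempotents_tfae {R : Type*} [Ring R] (a b c d y z : R)
    (hy : IsBCInverse a b c y) (hz : IsBCInverse d b c z) :
    List.TFAE
      [ a * y = d * z,
        a * y * d * z = d * z * a * y,
        a * z * d * y = d * y * a * z,
        IsGroupInverse (a * z) (d * y),
        IsGroupInverse (d * y) (a * z) ] := by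
  obtain ⟨⟨r, hr⟩, ⟨s, hs⟩, hyab, hcay⟩ := hy
  obtain ⟨⟨r', hr'⟩, ⟨s', hs'⟩, hzdb, hcdz⟩ := hz
  have hyaz : y * a * z = z := by
    calc y * a * z = y * a * (b * r' * z) := by rw [← hr']
    _ = y * a * b * r' * z := by simp [mul_assoc]
    _ = b * r' * z := by rw [hyab]
    _ = z := hr'.symm
  have hzdy : z * d * y = y := by
    calc z * d * y = z * d * (b * r * y) := by rw [← hr]
    _ = z * d * b * r * y := by simp [mul_assoc]
    _ = b * r * y := by rw [hzdb]
    _ = y := hr.symm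
  have hydz : y * d * z = y := by
    calc y * d * z = y * s * c * d * z := by rw [← hs]
    _ = y * s * (c * d * z) := by simp [mul_assoc]
    _ = y * s * c := by rw [hcdz]
    _ = y := hs.symm
  have hzay : z * a * y = z := by
    calc z * a * y = z * s' * c * a * y := by rw [← hs']
    _ = z * s' * (c * a * y) := by simp [mul_assoc]
    _ = z * s' * c := by rw [hcay]
    _ = z := hs'.symm
  have h1 : a * y * d * z = a * y := by
    calc a * y * d * z = a * (y * d * z) := by simp [mul_assoc]
    _ = a * y := by rw [hydz]
  have h2 : d * z * a * y = d * z := by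
    calc d * z * a * y = d * (z * a * y) := by simp [mul_assoc]
    _ = d * z := by rw [hzay]
  have h3 : a * z * d * y = a * y := by
    calc a * z * d * y = a * (z * d * y) := by simp [mul_assoc]
    _ = a * y := by rw [hzdy]
  have h4 : d * y * a * z = d * z := by
    calc d * y * a * z = d * (y * a * z) := by simp [mul_assoc]
    _ = d * z := by rw [hyaz]
  tfae_have 2 ↔ 1 := by rw [h1, h2]
  tfae_have 3 ↔ 1 := by rw [h3, h4]
  tfae_have 4 ↔ 1 := by
    constructor
    · rintro ⟨-, -, hc⟩
      rw [mul_assoc a z (d*y), ← mul_assoc z d y, hzdy] at hc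
      rw [mul_assoc d y (a*z), ← mul_assoc y a z, hyaz] at hc
      exact hc
    · intro h
      refine ⟨?_, ?_, ?_⟩
      · calc a * z * (d * y) * (a * z) = a * (z * d * y) * (a * z) := by simp [mul_assoc]
        _ = a * y * (a * z) := by rw [hzdy]
        _ = a * (y * a * z) := by simp [mul_assoc]
        _ = a * z := by rw [hyaz]
      · calc d * y * (a * z) * (d * y) = d * (y * a * z) * (d * y) := by simp [mul_assoc]
        _ = d * z * (d * y) := by rw [hyaz]
        _ = d * (z * d * y) := by simp [mul_assoc]
        _ = d * y := by rw [hzdy]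
      · calc a * z * (d * y) = a * (z * d * y) := by simp [mul_assoc]
        _ = a * y := by rw [hzdy]
        _ = d * z := h
        _ = d * (y * a * z) := by rw [hyaz]
        _ = d * y * (a * z) := by simp [mul_assoc]
  tfae_have 5 ↔ 1 := by
    constructor
    · rintro ⟨-, -, hc⟩
      rw [mul_assoc d y (a*z), ← mul_assoc y a z, hyaz] at hc
      rw [mul_assoc a z (d*y), ← mul_assoc z d y, hzdy] at hc
      exact hc.symm
    · intro h
      refine ⟨?_, ?_, ?_⟩
      · calc d * y * (a * z) * (d * y) = d * (y * a * z) * (d * y) := by simp [mul_assoc]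
        _ = d * z * (d * y) := by rw [hyaz]
        _ = d * (z * d * y) := by simp [mul_assoc]
        _ = d * y := by rw [hzdy]
      · calc a * z * (d * y) * (a * z) = a * (z * d * y) * (a * z) := by simp [mul_assoc]
        _ = a * y * (a * z) := by rw [hzdy]
        _ = a * (y * a * z) := by simp [mul_assoc]
        _ = a * z := by rw [hyaz]
      · calc d * y * (a * z) = d * (y * a * z) := by simp [mul_assoc]
        _ = d * z := by rw [hyaz]
        _ = a * y := h.symm
        _ = a * (z * d * y) := by rw [hzdy]
        _ = a * z * (d * y) := by simp [mul_assoc]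
  tfae_finish
end

section
/- Let R be an associative unital ring, let a, b, c, d ∈ R, and suppose y is the (b,c)-inverse of a and z is the (b,c)-inverse of d. Then the following statements are equivalent: (i) y·a = z·d; (ii) z·d·y·a = y·a·z·d; (iii) y·d·z·a = z·a·y·d; (iv) y·d is group invertible with group inverse z·a; (v) z·a is group invertible with group inverse y·d. -/
/-- characterizations of `y·a = z·d` for the (b,c)-inverses `y` of `a`
and `z` of `d`. -/
theorem equal_left_bc_idempotents_tfae {R : Type*} [Ring R] (a b c d y z : R)
    (hy : IsBCInverse a b c y) (hz : IsBCInverse d b c z) :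
    List.TFAE
      [ y * a = z * d,
        z * d * y * a = y * a * z * d,
        y * d * z * a = z * a * y * d,
        IsGroupInverse (y * d) (z * a),
        IsGroupInverse (z * a) (y * d) ] := by
  obtain ⟨⟨r, hr⟩, ⟨s, hs⟩, hyab, hcay⟩ := hy
  obtain ⟨⟨r', hr'⟩, ⟨s', hs'⟩, hzdb, hcdz⟩ := hz
  have hzdy : z * d * y = y := by
    nth_rewrite 1 [hr]
    rw [show z * d * (b * r * y) = z * d * b * (r * y) from by noncomm_ring, hzdb,
      ← mul_assoc, ← hr]
  have hyaz : y * a * z = z := by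
    nth_rewrite 1 [hr']
    rw [show y * a * (b * r' * z) = y * a * b * (r' * z) from by noncomm_ring, hyab,
      ← mul_assoc, ← hr']
  have hzay : z * a * y = z := by
    nth_rewrite 1 [hs']
    rw [show z * s' * c * a * y = z * s' * (c * a * y) from by noncomm_ring, hcay]
    exact hs'.symm
  have hydz : y * d * z = y := by
    nth_rewrite 1 [hs]
    rw [show y * s * c * d * z = y * s * (c * d * z) from by noncomm_ring, hcdz]
    exact hs.symm
  have hyay : y * a * y = y := by
    nth_rewrite 2 [hr]
    rw [show y * a * (b * r * y) = y * a * b * (r * y) from by noncomm_ring, hyab,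
      ← mul_assoc, ← hr]
  have hzdz : z * d * z = z := by
    nth_rewrite 2 [hr']
    rw [show z * d * (b * r' * z) = z * d * b * (r' * z) from by noncomm_ring, hzdb,
      ← mul_assoc, ← hr']
  have e2 : z * d * y * a = y * a * z * d ↔ y * a = z * d := by rw [hzdy, hyaz]
  have e3 : y * d * z * a = z * a * y * d ↔ y * a = z * d := by rw [hydz, hzay]
  have e4 : IsGroupInverse (y * d) (z * a) ↔ y * a = z * d := by
    constructor
    · rintro ⟨-, -, hcomm⟩
      rwa [← mul_assoc, hydz, ← mul_assoc, hzay] at hcomm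
    · intro h
      refine ⟨?_, ?_, ?_⟩
      · calc y * d * (z * a) * (y * d) = y * d * z * (a * y) * d := by noncomm_ring
          _ = y * (a * y) * d := by rw [hydz]
          _ = y * a * y * d := by noncomm_ring
          _ = y * d := by rw [hyay]
      · calc z * a * (y * d) * (z * a) = z * a * y * (d * z) * a := by noncomm_ring
          _ = z * (d * z) * a := by rw [hzay]
          _ = z * d * z * a := by noncomm_ring
          _ = z * a := by rw [hzdz]
      · calc y * d * (z * a) = y * d * z * a := by noncomm_ring
          _ = y * a := by rw [hydz]
          _ = z * d := h
          _ = z * a * y * d := by rw [hzay]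
          _ = z * a * (y * d) := by noncomm_ring
  have e5 : IsGroupInverse (z * a) (y * d) ↔ y * a = z * d := by
    constructor
    · rintro ⟨-, -, hcomm⟩
      rw [← mul_assoc, hzay, ← mul_assoc, hydz] at hcomm
      exact hcomm.symm
    · intro h
      refine ⟨?_, ?_, ?_⟩
      · calc z * a * (y * d) * (z * a) = z * a * y * (d * z) * a := by noncomm_ring
          _ = z * (d * z) * a := by rw [hzay]
          _ = z * d * z * a := by noncomm_ring
          _ = z * a := by rw [hzdz]
      · calc y * d * (z * a) * (y * d) = y * d * z * (a * y) * d := by noncomm_ring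
          _ = y * (a * y) * d := by rw [hydz]
          _ = y * a * y * d := by noncomm_ring
          _ = y * d := by rw [hyay]
      · calc z * a * (y * d) = z * a * y * d := by noncomm_ring
          _ = z * d := by rw [hzay]
          _ = y * a := h.symm
          _ = y * d * z * a := by rw [hydz]
          _ = y * d * (z * a) := by noncomm_ring
  tfae_have 1 ↔ 2 := e2.symm
  tfae_have 1 ↔ 3 := e3.symm
  tfae_have 1 ↔ 4 := e4.symm
  tfae_have 1 ↔ 5 := e5.symm
  tfae_finish
end

section
/- Let R be an associative unital ring, let a, b, c, d ∈ R, and suppose y is the (b,c)-inverse of a and z is the (b,c)-inverse of d. Then the following statements are equivalent: (i) z·y is the (b,c)-inverse of a·d; (ii) z = z·a·d·z·y = z·y·a·d·z; (iii) y = y·a·d·z·y = z·y·a·d·y. -/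
/-- the reverse order rule `(a·d)^{‖(b,c)} = z·y` holds iff
`z = z·a·d·z·y = z·y·a·d·z` iff `y = y·a·d·z·y = z·y·a·d·y`. -/
theorem reverse_order_rule_tfae {R : Type*} [Ring R] (a b c d y z : R)
    (hy : IsBCInverse a b c y) (hz : IsBCInverse d b c z) :
    List.TFAE
      [ IsBCInverse (a * d) b c (z * y),
        z = z * a * d * z * y ∧ z = z * y * a * d * z,
        y = y * a * d * z * y ∧ y = z * y * a * d * y ] := by
  obtain ⟨⟨r, hr⟩, ⟨s, hs⟩, hyab, hcay⟩ := hy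
  obtain ⟨⟨r', hr'⟩, ⟨s', hs'⟩, hzdb, hcdz⟩ := hz
  tfae_have 1 → 2
  | ⟨_, _, h3, h4⟩ => by
    constructor
    · calc z = z * s' * c := hs'
      _ = z * s' * (c * (a * d) * (z * y)) := by rw [h4]
      _ = z * a * d * z * y := by
          rw [show z * s' * (c * (a * d) * (z * y)) = (z * s' * c) * a * d * z * y from by
            noncomm_ring, ← hs']
    · calc z = b * r' * z := hr'
      _ = z * y * (a * d) * b * r' * z := by rw [h3]
      _ = z * y * a * d * z := by
          rw [show z * y * (a * d) * b * r' * z = z * y * a * d * (b * r' * z) from by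
            noncomm_ring, ← hr']
  tfae_have 2 → 3
  | ⟨h1, h2⟩ => by
    have hc : c = c * a * d * z * y := by
      calc c = c * d * z := hcdz.symm
      _ = c * d * (z * a * d * z * y) := by rw [← h1]
      _ = c * a * d * z * y := by
          rw [show c * d * (z * a * d * z * y) = (c * d * z) * a * d * z * y by
            noncomm_ring, hcdz]
    have hb : b = z * y * a * d * b := by
      calc b = z * d * b := hzdb.symm
      _ = z * y * a * d * z * d * b := by rw [← h2]
      _ = z * y * a * d * b := by
          rw [show z * y * a * d * z * d * b = z * y * a * d * (z * d * b) by
            noncomm_ring, hzdb]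
    constructor
    · calc y = y * s * c := hs
      _ = y * s * (c * a * d * z * y) := by rw [← hc]
      _ = y * a * d * z * y := by
          rw [show y * s * (c * a * d * z * y) = (y * s * c) * a * d * z * y by
            noncomm_ring, ← hs]
    · calc y = b * r * y := hr
      _ = z * y * a * d * b * r * y := by rw [← hb]
      _ = z * y * a * d * y := by
          rw [show z * y * a * d * b * r * y = z * y * a * d * (b * r * y) by
            noncomm_ring, ← hr]
  tfae_have 3 → 1
  | ⟨h1, h2⟩ => by
    refine ⟨⟨r', by rw [show b * r' * (z * y) = b * r' * z * y from by noncomm_ring, ← hr']⟩,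
      ⟨s, by rw [show z * y * s * c = z * (y * s * c) from by noncomm_ring, ← hs]⟩, ?_, ?_⟩
    · calc z * y * (a * d) * b = z * y * a * d * (y * a * b) := by rw [hyab]; noncomm_ring
      _ = z * y * a * d * y * a * b := by noncomm_ring
      _ = y * a * b := by rw [← h2]
      _ = b := hyab
    · calc c * (a * d) * (z * y) = c * a * y * a * d * z * y := by rw [hcay]; noncomm_ring
      _ = c * a * (y * a * d * z * y) := by noncomm_ring
      _ = c * a * y := by rw [← h1]
      _ = c := hcay
  tfae_finish
end

section
/- Let R be an associative unital ring, let a, b, c, d ∈ R, and suppose y is the (b,c)-inverse of a and z is the (b,c)-inverse of d. Then the following statements are equivalent: (i) y·a = d·z; (ii) y·d·z·a = d·z·a·y; (iii) z·d·y·a = d·y·a·z; (iv) y = d·z·y and z = z·y·a; (v) y·a·z = z·y·a and y·d·z = d·z·y. Moreover, if any of these statements holds, then z·y is the (b,c)-inverse of a·d. -/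
/-- characterizations of `y·a = d·z` for the (b,c)-inverses `y` of `a`
and `z` of `d`; moreover any of them implies the reverse order rule
`(a·d)^{‖(b,c)} = z·y`. -/
theorem mixed_bc_idempotents_tfae {R : Type*} [Ring R] (a b c d y z : R)
    (hy : IsBCInverse a b c y) (hz : IsBCInverse d b c z) :
    List.TFAE
      [ y * a = d * z,
        y * d * z * a = d * z * a * y,
        z * d * y * a = d * y * a * z,
        y = d * z * y ∧ z = z * y * a,
        y * a * z = z * y * a ∧ y * d * z = d * z * y ]
    ∧ (y * a = d * z → IsBCInverse (a * d) b c (z * y)) := by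
  obtain ⟨⟨r, hr⟩, ⟨s, hs⟩, hab, hcy⟩ := hy
  obtain ⟨⟨r', hr'⟩, ⟨s', hs'⟩, hdb, hcz⟩ := hz
  -- key identities
  have yaz : y * a * z = z := by
    conv_lhs => rw [hr']
    rw [show y * a * (b * r' * z) = y * a * b * r' * z by simp [mul_assoc], hab, ← hr']
  have zdy : z * d * y = y := by
    conv_lhs => rw [hr]
    rw [show z * d * (b * r * y) = z * d * b * r * y by simp [mul_assoc], hdb, ← hr]
  have zay : z * a * y = z := by
    conv_lhs => rw [hs']
    rw [show z * s' * c * a * y = z * s' * (c * a * y) by simp [mul_assoc], hcy, ← hs']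
  have ydz : y * d * z = y := by
    conv_lhs => rw [hs]
    rw [show y * s * c * d * z = y * s * (c * d * z) by simp [mul_assoc], hcz, ← hs]
  have yay : y * a * y = y := by
    nth_rewrite 1 [hs]
    rw [show y * s * c * a * y = y * s * (c * a * y) by simp [mul_assoc], hcy, ← hs]
  have zdz : z * d * z = z := by
    nth_rewrite 1 [hs']
    rw [show z * s' * c * d * z = z * s' * (c * d * z) by simp [mul_assoc], hcz, ← hs']
  constructor
  · tfae_have 1 ↔ 2 := by
      rw [show y * d * z * a = y * a from by rw [ydz],
        show d * z * a * y = d * z from by rw [mul_assoc, mul_assoc, ← mul_assoc z a y, zay]]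
    tfae_have 1 ↔ 3 := by
      rw [show z * d * y * a = y * a from by rw [zdy],
        show d * y * a * z = d * z from by rw [mul_assoc, mul_assoc, ← mul_assoc y a z, yaz]]
    tfae_have 1 → 4 := by
      intro h
      refine ⟨by rw [← h]; exact yay.symm, ?_⟩
      rw [mul_assoc, h, ← mul_assoc, zdz]
    tfae_have 4 → 5 := fun h => ⟨yaz.trans h.2, ydz.trans h.1⟩
    tfae_have 5 → 1 := by
      intro h
      have hdzy : d * z * y = y := h.2.symm.trans ydz
      have hzya : z * y * a = z := h.1.symm.trans yaz
      calc y * a = d * z * y * a := by rw [hdzy]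
        _ = d * (z * y * a) := by simp [mul_assoc]
        _ = d * z := by rw [hzya]
    tfae_finish
  · intro h
    refine ⟨⟨r', ?_⟩, ⟨s, ?_⟩, ?_, ?_⟩
    · conv_lhs => rw [hr']
      simp [mul_assoc]
    · conv_lhs => rw [hs]
      simp [mul_assoc]
    · calc z * y * (a * d) * b = z * (y * a) * (d * b) := by simp [mul_assoc]
        _ = z * (d * z) * (d * b) := by rw [h]
        _ = z * d * z * (d * b) := by rw [mul_assoc z d z]
        _ = z * (d * b) := by rw [zdz]
        _ = b := by rw [← mul_assoc, hdb]
    · calc c * (a * d) * (z * y) = c * a * (d * z) * y := by simp [mul_assoc]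
        _ = c * a * (y * a) * y := by rw [h]
        _ = c * a * y * (a * y) := by simp [mul_assoc]
        _ = c * (a * y) := by rw [hcy]
        _ = c := by rw [← mul_assoc, hcy]
end
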